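/- arXiv:2307.01962 — 8 statements merged into one kernel-verified Lean document; each statement's English description precedes it below -/
import Mathlib

section
/- Let M be an n×n block matrix with blocks A (k×k, nonsingular), B, C, D, and let S = D - C A^{-1} B be the Schur complement of A in M. For any row indices k+1 ≤ i_1 < ... < i_s ≤ n and column indices k+1 ≤ j_1 < ... < j_s ≤ n, the determinant of the submatrix of M with rows {1,...,k, i_1,...,i_s} and columns {1,...,k, j_1,...,j_s} equals det(A) times the determinant of the submatrix of S with rows i_1,...,i_s and columns j_1,...,j_s. -/
open Matrix

/-- Schur complement determinant lemma for submatrices: for a block matrix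
`M = [[A, B], [C, D]]` with `A` nonsingular, and strictly increasing selections of
rows `f` and columns `g` from the second block, the determinant of the submatrix of `M`
on rows `{1,…,k} ∪ f` and columns `{1,…,k} ∪ g` equals `det A` times the determinant of
the corresponding submatrix of the Schur complement `S = D - C A⁻¹ B`. -/
theorem stmt0 {K : Type*} [Field K] {k m s : ℕ}
    (M : Matrix (Fin k ⊕ Fin m) (Fin k ⊕ Fin m) K)
    (hA : IsUnit (M.toBlocks₁₁).det)
    (f g : Fin s → Fin m) (hf : StrictMono f) (hg : StrictMono g) :
    (M.submatrix (Sum.map id f) (Sum.map id g)).det =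
      (M.toBlocks₁₁).det *
        ((M.toBlocks₂₂ - M.toBlocks₂₁ * (M.toBlocks₁₁)⁻¹ * M.toBlocks₁₂).submatrix f g).det := by
  have hM : M.submatrix (Sum.map id f) (Sum.map id g) =
      fromBlocks M.toBlocks₁₁ (M.toBlocks₁₂.submatrix id g)
        (M.toBlocks₂₁.submatrix f id) (M.toBlocks₂₂.submatrix f g) := by
    ext i j
    cases i <;> cases j <;> rfl
  haveI := hA.invertible
  haveI : Invertible M.toBlocks₁₁ := M.toBlocks₁₁.invertibleOfDetInvertible
  rw [hM, det_fromBlocks₁₁, invOf_eq_nonsing_inv]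
  congr 1
end

section
/- Let L be an n×n matrix over a commutative ring whose every row sum is zero (i.e., L multiplied by the all-ones vector is zero). Then for any fixed row index i, the quantity (-1)^{i+j} det(L(i,j)) is independent of the column index j, where L(i,j) denotes L with row i and column j deleted. -/
open Matrix

lemma aux_det_zero {R : Type*} [CommRing R] {n : ℕ}
    (M : Matrix (Fin (n + 1)) (Fin (n + 1)) R) (h : M *ᵥ (fun _ => 1) = 0) : M.det = 0 := by
  have h2 : M.adjugate *ᵥ (M *ᵥ (fun _ => 1)) = 0 := by rw [h]; simp
  rw [Matrix.mulVec_mulVec, Matrix.adjugate_mul, Matrix.smul_mulVec,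
    Matrix.one_mulVec] at h2
  have := congrFun h2 0
  simpa using this

lemma aux_cof {R : Type*} [CommRing R] {n : ℕ} (L : Matrix (Fin (n + 1)) (Fin (n + 1)) R)
    (j : Fin (n + 1)) (i : Fin (n + 1)) :
    (L.updateRow i (Pi.single j 1)).det =
      (-1 : R) ^ ((i : ℕ) + (j : ℕ)) * (L.submatrix i.succAbove j.succAbove).det := by
  rw [Matrix.det_succ_row _ i]
  rw [Finset.sum_eq_single j]
  · simp [Matrix.submatrix_updateRow_succAbove]
  · intro k _ hk
    simp [Pi.single_eq_of_ne hk]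
  · simp

/-- If every row sum of an `n × n` matrix `L` is zero, then for any fixed row index `i`
the cofactor `(-1)^(i+j) det(L(i,j))` does not depend on the column index `j`,
where `L(i,j)` is obtained from `L` by deleting row `i` and column `j`. -/
theorem stmt2 {R : Type*} [CommRing R] {n : ℕ} (L : Matrix (Fin (n + 1)) (Fin (n + 1)) R)
    (h : ∀ i, ∑ j, L i j = 0) (i j j' : Fin (n + 1)) :
    (-1 : R) ^ ((i : ℕ) + (j : ℕ)) * (L.submatrix i.succAbove j.succAbove).det =
      (-1 : R) ^ ((i : ℕ) + (j' : ℕ)) * (L.submatrix i.succAbove j'.succAbove).det := by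
  rw [← aux_cof L j i, ← aux_cof L j' i]
  have key : (L.updateRow i (Pi.single j 1 - Pi.single j' 1)).det = 0 := by
    apply aux_det_zero
    ext k
    simp only [Matrix.mulVec, Matrix.updateRow_apply, dotProduct]
    by_cases hk : k = i
    · subst hk
      simp only [if_pos rfl]
      rcases eq_or_ne j j' with rfl | hjj
      · simp
      · rw [Finset.sum_eq_add_of_mem j j' (Finset.mem_univ _) (Finset.mem_univ _) hjj ?_]
        · simp [Pi.single_eq_of_ne hjj, Pi.single_eq_of_ne hjj.symm]
        · intro k _ hk
          simp [Pi.single_eq_of_ne hk.1, Pi.single_eq_of_ne hk.2]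
    · simp only [if_neg hk, Pi.zero_apply, mul_one]
      exact h k
  have lin := Matrix.det_updateRow_add L i (Pi.single j 1 - Pi.single j' 1) (Pi.single j' 1)
  rw [sub_add_cancel] at lin
  rw [lin, key, zero_add]
end

section
/- Let L be an n×n matrix over a commutative ring whose every row sum is zero, and let X = adj(L) be its adjugate. Then every entry of column j of X equals the (j,j) cofactor of L; in particular X has constant columns, i.e., X_{uj} = X_{vj} for all u, v, j. -/
open Matrix

lemma det_eq_zero_of_row_sums_zero {R : Type*} [CommRing R] {n : ℕ}
    (M : Matrix (Fin (n + 1)) (Fin (n + 1)) R) (h : ∀ i, ∑ j, M i j = 0) : M.det = 0 := by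
  have hv : M *ᵥ (fun _ => (1 : R)) = 0 := by
    funext i
    simpa [Matrix.mulVec, dotProduct] using h i
  have := congrFun (congrArg (· *ᵥ (fun _ => (1 : R))) (Matrix.adjugate_mul M)) 0
  simp only [← Matrix.mulVec_mulVec, hv, Matrix.mulVec_zero] at this
  simpa [Matrix.smul_mulVec] using this.symm

/-- If every row sum of `L` is zero and `X = adj(L)` is its adjugate, then every entry of
column `j` of `X` equals the `(j,j)` cofactor of `L` (so in particular `X` has constant
columns). Recall that `(adj L) u j` is the `(j, u)` cofactor of `L`. -/
theorem stmt3 {R : Type*} [CommRing R] {n : ℕ} (L : Matrix (Fin (n + 1)) (Fin (n + 1)) R)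
    (h : ∀ i, ∑ j, L i j = 0) :
    (∀ u j, L.adjugate u j = (L.submatrix j.succAbove j.succAbove).det) ∧
      ∀ u v j, L.adjugate u j = L.adjugate v j := by
  have const : ∀ u v j, L.adjugate u j = L.adjugate v j := by
    intro u v j
    rw [Matrix.adjugate_apply, Matrix.adjugate_apply]
    have hz : (L.updateRow j (Pi.single u 1 - Pi.single v 1)).det = 0 := by
      apply det_eq_zero_of_row_sums_zero
      intro i
      by_cases hij : i = j
      · subst hij; simp
      · simpa [Matrix.updateRow_ne hij] using h i
    have hadd := Matrix.det_updateRow_add L j (Pi.single u 1 - Pi.single v 1) (Pi.single v 1)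
    simp only [sub_add_cancel] at hadd
    rw [hadd, hz, zero_add]
  refine ⟨fun u j => ?_, const⟩
  rw [const u j j, Matrix.adjugate_fin_succ_eq_det_submatrix]
  have : ((-1 : R)) ^ ((j : ℕ) + j) = 1 := by
    rw [← two_mul, pow_mul]; norm_num
  rw [this, one_mul]
end

section
/- Let G be a weighted digraph on n vertices with Laplacian matrix L_G partitioned as L_G = [[D_1, -R],[-S, D_2]] where D_1, D_2 are invertible diagonal blocks. Then the Schur complements D_1 - R D_2^{-1} S and D_2 - S D_1^{-1} R both have all row sums zero, i.e., they are Laplacian matrices of weighted digraphs. -/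
open Matrix

/-- If the Laplacian matrix of a weighted digraph is partitioned as
`L_G = [[D₁, -R], [-S, D₂]]` with `D₁, D₂` invertible diagonal blocks, then both Schur
complements `D₁ - R D₂⁻¹ S` and `D₂ - S D₁⁻¹ R` have all row sums zero, i.e. they are
Laplacian matrices of weighted digraphs. -/
theorem stmt5 {K : Type*} [Field K] {p q : ℕ} (d₁ : Fin p → K) (d₂ : Fin q → K)
    (R : Matrix (Fin p) (Fin q) K) (S : Matrix (Fin q) (Fin p) K)
    (h₁ : IsUnit (diagonal d₁).det) (h₂ : IsUnit (diagonal d₂).det)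
    (hrow : ∀ i, ∑ j, (fromBlocks (diagonal d₁) (-R) (-S) (diagonal d₂)) i j = 0) :
    (∀ i, ∑ j, (diagonal d₁ - R * (diagonal d₂)⁻¹ * S) i j = 0) ∧
      (∀ i, ∑ j, (diagonal d₂ - S * (diagonal d₁)⁻¹ * R) i j = 0) := by
  have hR : ∀ i, ∑ j, R i j = d₁ i := by
    intro i
    have := hrow (Sum.inl i)
    simp [Fintype.sum_sum_type, fromBlocks, diagonal, Finset.sum_ite_eq',
      Finset.sum_neg_distrib] at this
    linear_combination -this
  have hS : ∀ i, ∑ j, S i j = d₂ i := by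
    intro i
    have := hrow (Sum.inr i)
    simp [Fintype.sum_sum_type, fromBlocks, diagonal, Finset.sum_ite_eq',
      Finset.sum_neg_distrib] at this
    linear_combination -this
  have hmv1 : (diagonal d₁) *ᵥ 1 = R *ᵥ 1 := by
    funext i; simp [mulVec, dotProduct, hR i, diagonal_apply, Finset.sum_ite_eq]
  have hmv2 : (diagonal d₂) *ᵥ 1 = S *ᵥ 1 := by
    funext i; simp [mulVec, dotProduct, hS i, diagonal_apply, Finset.sum_ite_eq]
  have hinv1 : (diagonal d₁)⁻¹ * (diagonal d₁) = 1 := nonsing_inv_mul _ h₁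
  have hinv2 : (diagonal d₂)⁻¹ * (diagonal d₂) = 1 := nonsing_inv_mul _ h₂
  constructor
  · intro i
    have : ((diagonal d₁ - R * (diagonal d₂)⁻¹ * S) *ᵥ 1) i = 0 := by
      have e : (R * (diagonal d₂)⁻¹) *ᵥ (diagonal d₂ *ᵥ 1) = R *ᵥ (1 : Fin q → K) := by
        rw [mulVec_mulVec, Matrix.mul_assoc, hinv2, Matrix.mul_one]
      rw [sub_mulVec, hmv1, ← mulVec_mulVec, ← hmv2, e]
      simp
    simpa [mulVec, dotProduct] using this
  · intro i
    have : ((diagonal d₂ - S * (diagonal d₁)⁻¹ * R) *ᵥ 1) i = 0 := by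
      have e : (S * (diagonal d₁)⁻¹) *ᵥ (diagonal d₁ *ᵥ 1) = S *ᵥ (1 : Fin p → K) := by
        rw [mulVec_mulVec, Matrix.mul_assoc, hinv1, Matrix.mul_one]
      rw [sub_mulVec, hmv2, ← mulVec_mulVec, ← hmv1, e]
      simp
    simpa [mulVec, dotProduct] using this
end

section
/- Let P be an n×n irreducible row-stochastic matrix with eigenvalues λ_1 = 1, λ_2, ..., λ_n. Define the Kemeny constant K(P) = Σ_{i=2}^{n} 1/(1-λ_i). Let R be an n×r nonnegative matrix and S an r×n nonnegative matrix such that RS = P and SR = Q is an r×r irreducible row-stochastic matrix. Then K(P) = K(Q) + n - r. -/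
/-- `P` is row-stochastic: nonnegative entries and all row sums equal to `1`. -/
def RowStochastic {n : Type*} [Fintype n] (P : Matrix n n ℝ) : Prop :=
  (∀ i j, 0 ≤ P i j) ∧ ∀ i, ∑ j, P i j = 1

/-- Irreducibility of a nonnegative matrix: every entry of some positive power is positive. -/
def MatIrreducible {n : Type*} [Fintype n] [DecidableEq n] (P : Matrix n n ℝ) : Prop :=
  ∀ i j, ∃ k : ℕ, 0 < k ∧ 0 < (P ^ k) i j

/-- The Kemeny constant of `P`, defined spectrally as `∑_{λ ≠ 1} 1/(1-λ)`, the sum running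
over the roots (with multiplicity) of the characteristic polynomial of `P` over `ℂ`,
with one copy of the eigenvalue `1` removed. -/
noncomputable def kemeny {n : Type*} [Fintype n] [DecidableEq n] (P : Matrix n n ℝ) : ℂ :=
  (((P.map (Complex.ofReal)).charpoly.roots.erase 1).map fun z => (1 - z)⁻¹).sum

open Polynomial Matrix

private lemma charpoly_factor_eq {m k : ℕ} (R : Matrix (Fin m) (Fin k) ℝ)
    (S : Matrix (Fin k) (Fin m) ℝ) :
    (R * S).charpoly * X ^ k = (S * R).charpoly * X ^ m := by
  classical
  set R' : Matrix (Fin m) (Fin k) ℝ[X] := R.map C with hR'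
  set S' : Matrix (Fin k) (Fin m) ℝ[X] := S.map C with hS'
  have hc1 : charmatrix (R * S) = (X : ℝ[X]) • (1 : Matrix (Fin m) (Fin m) ℝ[X]) - R' * S' := by
    unfold charmatrix
    rw [RingHom.mapMatrix_apply, Matrix.map_mul, smul_one_eq_diagonal, scalar_apply]
  have hc2 : charmatrix (S * R) = (X : ℝ[X]) • (1 : Matrix (Fin k) (Fin k) ℝ[X]) - S' * R' := by
    unfold charmatrix
    rw [RingHom.mapMatrix_apply, Matrix.map_mul, smul_one_eq_diagonal, scalar_apply]
  have key : fromBlocks (1 : Matrix (Fin m) (Fin m) ℝ[X]) R' 0 1 *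
      fromBlocks (charmatrix (R * S)) 0 S' ((X : ℝ[X]) • 1) =
      fromBlocks ((X : ℝ[X]) • 1) 0 S' (charmatrix (S * R)) *
      fromBlocks 1 R' 0 1 := by
    rw [fromBlocks_multiply, fromBlocks_multiply, hc1, hc2]
    simp [Matrix.mul_smul, Matrix.smul_mul, Matrix.sub_mul, Matrix.mul_sub]
  have hdet := congrArg Matrix.det key
  simp only [det_mul, det_fromBlocks_zero₂₁, det_fromBlocks_zero₁₂, det_smul, det_one,
    Fintype.card_fin, one_mul, mul_one] at hdet
  rw [Matrix.charpoly, Matrix.charpoly]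
  linear_combination hdet

private lemma one_mem_roots {m : ℕ} (P : Matrix (Fin m) (Fin m) ℝ) (hP : RowStochastic P)
    (hm : 0 < m) : (1 : ℂ) ∈ ((P.map (Complex.ofReal)).charpoly).roots := by
  classical
  set P' : Matrix (Fin m) (Fin m) ℂ := P.map Complex.ofReal with hP'
  rw [mem_roots ((charpoly_monic P').ne_zero)]
  have heval : P'.charpoly.eval 1 = ((1 : Matrix (Fin m) (Fin m) ℂ) - P').det := by
    rw [Matrix.charpoly, ← coe_evalRingHom, RingHom.map_det]
    congr 1
    ext i j
    by_cases h : i = j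
    · subst h; simp [charmatrix_apply_eq, Matrix.one_apply, Matrix.sub_apply]
    · simp [charmatrix_apply_ne _ _ _ h, Matrix.one_apply_ne h, Matrix.sub_apply]
  rw [IsRoot, heval, ← Matrix.exists_mulVec_eq_zero_iff]
  refine ⟨fun _ => 1, ?_, ?_⟩
  · intro h
    have := congrFun h ⟨0, hm⟩
    simp at this
  · funext i
    have hsum : ∑ j, P' i j = 1 := by
      simp only [hP', Matrix.map_apply]
      rw [← Complex.ofReal_sum, hP.2 i, Complex.ofReal_one]
    simp [Matrix.mulVec, dotProduct, Matrix.sub_apply, Matrix.one_apply,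
      Finset.sum_sub_distrib, hsum]

/-- If the irreducible row-stochastic `n × n` matrix `P` factors as `P = RS` with `R, S`
nonnegative, and `Q = SR` is an irreducible row-stochastic `r × r` matrix, then the Kemeny
constants satisfy `K(P) = K(Q) + n - r`. -/
theorem stmt6 {n r : ℕ} (R : Matrix (Fin n) (Fin r) ℝ) (S : Matrix (Fin r) (Fin n) ℝ)
    (hR : ∀ i j, 0 ≤ R i j) (hS : ∀ i j, 0 ≤ S i j)
    (hP : RowStochastic (R * S)) (hPirr : MatIrreducible (R * S))
    (hQ : RowStochastic (S * R)) (hQirr : MatIrreducible (S * R)) :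
    kemeny (R * S) = kemeny (S * R) + (n : ℂ) - (r : ℂ) := by
  classical
  by_cases hn : n = 0
  · have hr0 : r = 0 := by
      by_contra hr
      have h1 := hQ.2 ⟨0, Nat.pos_of_ne_zero hr⟩
      subst hn
      simp [Matrix.mul_apply] at h1
    subst hn; subst hr0
    simp [kemeny, Matrix.charpoly, Matrix.det_isEmpty]
  by_cases hr : r = 0
  · exfalso
    have h1 := hP.2 ⟨0, Nat.pos_of_ne_zero hn⟩
    subst hr
    simp [Matrix.mul_apply] at h1
  have hnpos : 0 < n := Nat.pos_of_ne_zero hn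
  have hrpos : 0 < r := Nat.pos_of_ne_zero hr
  set p : ℂ[X] := ((R * S).map Complex.ofReal).charpoly with hp
  set q : ℂ[X] := ((S * R).map Complex.ofReal).charpoly with hq
  have hmapRS : (R * S).map Complex.ofReal = (R * S).map (Complex.ofRealHom : ℝ →+* ℂ) := rfl
  have hmapSR : (S * R).map Complex.ofReal = (S * R).map (Complex.ofRealHom : ℝ →+* ℂ) := rfl
  have hfac : p * X ^ r = q * X ^ n := by
    have h := congrArg (Polynomial.map (Complex.ofRealHom : ℝ →+* ℂ)) (charpoly_factor_eq R S)
    rw [Polynomial.map_mul, Polynomial.map_mul, Polynomial.map_pow, Polynomial.map_pow,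
      Polynomial.map_X, ← Matrix.charpoly_map, ← Matrix.charpoly_map] at h
    rw [hp, hq, hmapRS, hmapSR]
    exact h
  have hpne : p ≠ 0 := (charpoly_monic _).ne_zero
  have hqne : q ≠ 0 := (charpoly_monic _).ne_zero
  have hXr : (X : ℂ[X]) ^ r ≠ 0 := pow_ne_zero _ X_ne_zero
  have hXn : (X : ℂ[X]) ^ n ≠ 0 := pow_ne_zero _ X_ne_zero
  have hroots : p.roots + Multiset.replicate r 0 = q.roots + Multiset.replicate n 0 := by
    have h := congrArg Polynomial.roots hfac
    rwa [Polynomial.roots_mul (mul_ne_zero hpne hXr), Polynomial.roots_mul (mul_ne_zero hqne hXn),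
      Polynomial.roots_pow, Polynomial.roots_pow, roots_X, Multiset.nsmul_singleton,
      Multiset.nsmul_singleton] at h
  have h1p : (1 : ℂ) ∈ p.roots := one_mem_roots _ hP hnpos
  have h1q : (1 : ℂ) ∈ q.roots := one_mem_roots _ hQ hrpos
  have herase : p.roots.erase 1 + Multiset.replicate r 0 =
      q.roots.erase 1 + Multiset.replicate n 0 := by
    have h := hroots
    rw [← Multiset.cons_erase h1p, ← Multiset.cons_erase h1q, Multiset.cons_add,
      Multiset.cons_add] at h
    exact (Multiset.cons_inj_right _).mp h
  have hsum := congrArg (fun s : Multiset ℂ => (s.map fun z => (1 - z)⁻¹).sum) herase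
  simp only [Multiset.map_add, Multiset.sum_add, Multiset.map_replicate, sub_zero, inv_one,
    Multiset.sum_replicate, nsmul_eq_mul, mul_one] at hsum
  have hk : kemeny (R * S) + (r : ℂ) = kemeny (S * R) + (n : ℂ) := hsum
  linear_combination hk
end

section
/- Let G be a digraph on n vertices in which every vertex has positive outdegree, and let G(k) be its k-blow-up. For any vertex u in the copy-class V_i, the number of oriented spanning trees of G(k) rooted at u equals k^{nk-2} · (Π_{v∈V(G)} d_v^+(G)^{k-1}) · κ_i(G), where κ_i(G) is the number of oriented spanning trees of G rooted at i. -/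
/-! A digraph on a finite vertex type `V` is given by its edge set `E : Finset (V × V)`. -/

variable {V : Type*} [Fintype V] [DecidableEq V]

/-- The outdegree of a vertex `v`: the number of edges with tail `v`. -/
def outdeg (E : Finset (V × V)) (v : V) : ℕ := (E.filter fun e => e.1 = v).card

/-- The indegree of a vertex `v`: the number of edges with head `v`. -/
def indeg (E : Finset (V × V)) (v : V) : ℕ := (E.filter fun e => e.2 = v).card

/-- The edge set of the line digraph: its vertices are the edges of `G`, with an edge
`e → f` exactly when the head of `e` is the tail of `f`. -/
def lineE (E : Finset (V × V)) : Finset ({e // e ∈ E} × {e // e ∈ E}) :=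
  Finset.univ.filter fun p => (p.1 : V × V).2 = (p.2 : V × V).1

/-- Strong connectivity: every vertex can reach every other vertex along directed edges. -/
def StronglyConnected (E : Finset (V × V)) : Prop :=
  ∀ u v : V, Relation.ReflTransGen (fun a b => (a, b) ∈ E) u v

/-- The transition matrix of the simple random walk on the digraph `E`: from `i`, move to
each out-neighbour with probability `1 / d⁺(i)`. -/
noncomputable def transMat (E : Finset (V × V)) : Matrix V V ℝ :=
  fun i j => if (i, j) ∈ E then (outdeg E i : ℝ)⁻¹ else 0

/-- `π` is a stationary distribution of `P`: positive, summing to `1`, with `πᵀ P = πᵀ`. -/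
def IsStationaryDist {n : Type*} [Fintype n] (P : Matrix n n ℝ) (π : n → ℝ) : Prop :=
  (∀ i, 0 < π i) ∧ (∑ i, π i = 1) ∧ ∀ j, ∑ i, π i * P i j = π j

/-- `f` is (the parent map of) an oriented spanning tree of `E` rooted at `u`: the root is
a fixed point, every other vertex `v` has its unique out-edge `(v, f v) ∈ E`, and iterating
`f` from any vertex reaches the root. -/
def IsSpanTree (E : Finset (V × V)) (u : V) (f : V → V) : Prop :=
  f u = u ∧ (∀ v, v ≠ u → (v, f v) ∈ E) ∧ ∀ v, ∃ k : ℕ, f^[k] v = u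

/-- The number of oriented spanning trees of `E` rooted at `u`. -/
noncomputable def kappa (E : Finset (V × V)) (u : V) : ℕ :=
  Nat.card {f : V → V // IsSpanTree E u f}

/-- `σ` is (the successor map of) an Eulerian circuit of `E`: a permutation of the edges
such that each edge is followed by an edge starting at its head, acting transitively on
the edges (a single closed walk through all edges). Eulerian circuits, counted up to
cyclic rotation, correspond bijectively to such permutations. -/
def IsEulerSucc (E : Finset (V × V)) (σ : Equiv.Perm {e // e ∈ E}) : Prop :=
  (∀ e : {e // e ∈ E}, (e : V × V).2 = ((σ e : {e // e ∈ E}) : V × V).1) ∧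
    ∀ e f : {e // e ∈ E}, ∃ k : ℕ, (σ ^ k) e = f

/-- The number of Eulerian circuits of `E`. -/
noncomputable def eulerCount (E : Finset (V × V)) : ℕ :=
  Nat.card {σ : Equiv.Perm {e // e ∈ E} // IsEulerSucc E σ}

/-- The `k`-blow-up of `E`: each vertex `i` becomes the class `{i} × Fin k`, with all edges
from the class of `i` to the class of `j` whenever `(i, j)` is an edge. -/
def blowup (E : Finset (V × V)) (k : ℕ) : Finset ((V × Fin k) × (V × Fin k)) :=
  Finset.univ.filter fun p => (p.1.1, p.2.1) ∈ E

/-- The spanning tree enumerator of `E` rooted at `u`, with edge weights induced by vertex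
indeterminates `w` (the edge `(v, z)` has weight `w z`): the sum over all oriented spanning
trees rooted at `u` of the product of the weights of their edges. -/
noncomputable def treeEnum {R : Type*} [CommRing R] (E : Finset (V × V)) (w : V → R)
    (u : V) : R :=
  ∑ᶠ (f : V → V) (_ : IsSpanTree E u f), ∏ v ∈ Finset.univ.erase u, w (f v)

section Aux

open scoped Matrix

variable {W : Type*} [Fintype W] [DecidableEq W]

/-- The (out-degree) Laplacian of a digraph, over `ℚ`. -/
def Lap (F : Finset (W × W)) : Matrix W W ℚ :=
  Matrix.of fun v w => (if v = w then (outdeg F v : ℚ) else 0) - (if (v, w) ∈ F then 1 else 0)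

lemma det_eq_one_of_rho (N : Matrix W W ℚ) (ρ : W → ℕ)
    (hdiag : ∀ v, N v v = 1)
    (hoff : ∀ v w, v ≠ w → N v w ≠ 0 → ρ w < ρ v) : N.det = 1 := by
  rw [Matrix.det_apply']
  rw [Finset.sum_eq_single (1 : Equiv.Perm W)]
  · simp [hdiag]
  · intro σ _ hσ
    have hsupp : σ.support.Nonempty :=
      Finset.nonempty_iff_ne_empty.mpr (fun h => hσ (Equiv.Perm.support_eq_empty_iff.mp h))
    obtain ⟨w₀, hw₀, hmax⟩ := σ.support.exists_max_image ρ hsupp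
    have hσw₀ : σ w₀ ∈ σ.support := Equiv.Perm.apply_mem_support.mpr hw₀
    have hne : σ w₀ ≠ w₀ := Equiv.Perm.mem_support.mp hw₀
    have hzero : N (σ w₀) w₀ = 0 := by
      by_contra h
      exact absurd (hoff _ _ hne h) (not_lt.mpr (hmax _ hσw₀))
    exact mul_eq_zero_of_right _
      (Finset.prod_eq_zero (f := fun i => N (σ i) i) (Finset.mem_univ w₀) hzero)
  · intro h; exact absurd (Finset.mem_univ _) h

open scoped Classical in
lemma det_choice (r : W) (g : W → W) (N : Matrix W W ℚ)
    (hN : ∀ v w, N v w = (if v = w then 1 else 0) - (if v ≠ r ∧ g v = w then 1 else 0)) :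
    N.det = if (∀ v, ∃ m, g^[m] v = r) then 1 else 0 := by
  by_cases hreach : ∀ v, ∃ m, g^[m] v = r
  · rw [if_pos hreach]
    refine det_eq_one_of_rho N (fun v => Nat.find (hreach v)) ?_ ?_
    · intro v
      rw [hN]
      by_cases hv : v = r
      · simp [hv]
      · have : ¬ (v ≠ r ∧ g v = v) := by
          rintro ⟨-, hgv⟩
          obtain ⟨m, hm⟩ := hreach v
          rw [Function.iterate_fixed hgv] at hm
          exact hv hm
        simp [this]
    · intro v w hvw hNvw
      rw [hN] at hNvw
      have hcond : v ≠ r ∧ g v = w := by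
        by_contra h
        simp [if_neg hvw, if_neg h] at hNvw
      obtain ⟨hvr, hgv⟩ := hcond
      have hfind := Nat.find_spec (hreach v)
      have hpos : 0 < Nat.find (hreach v) := by
        rcases Nat.eq_zero_or_pos (Nat.find (hreach v)) with h | h
        · rw [h] at hfind; simp at hfind; exact absurd hfind hvr
        · exact h
      have hw : g^[Nat.find (hreach v) - 1] w = r := by
        have : g^[(Nat.find (hreach v) - 1) + 1] v = r := by
          rwa [Nat.sub_add_cancel hpos]
        rwa [Function.iterate_succ_apply, hgv] at this
      calc Nat.find (hreach w) ≤ Nat.find (hreach v) - 1 := Nat.find_le hw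
        _ < Nat.find (hreach v) := Nat.sub_lt hpos one_pos
  · rw [if_neg hreach]
    push_neg at hreach
    obtain ⟨v₀, hv₀⟩ := hreach
    obtain ⟨m₁, m₂, hne, heq⟩ := Finite.exists_ne_map_eq_of_infinite (fun m : ℕ => g^[m] v₀)
    wlog hlt : m₁ < m₂ generalizing m₁ m₂
    · exact this m₂ m₁ hne.symm heq.symm (by omega)
    set p := m₂ - m₁ with hp
    have hppos : 0 < p := by omega
    set y := g^[m₁] v₀ with hy
    have hyy : g^[p] y = y := by
      rw [hy, ← Function.iterate_add_apply, hp]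
      have : m₂ - m₁ + m₁ = m₂ := by omega
      rw [this]; exact heq.symm
    set O : Finset W := (Finset.range p).image (fun j => g^[j] y) with hO
    have horbit : ∀ w ∈ O, ∀ j : ℕ, g^[j] w ∈ O := by
      intro w hw j
      induction j with
      | zero => simpa using hw
      | succ j ih =>
        rw [Function.iterate_succ_apply']
        obtain ⟨l, hl, hlw⟩ := Finset.mem_image.mp ih
        rw [Finset.mem_range] at hl
        rcases Nat.lt_or_ge (l+1) p with h | h
        · exact Finset.mem_image.mpr ⟨l+1, Finset.mem_range.mpr h, by
            rw [← hlw]; exact Function.iterate_succ_apply' g l y⟩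
        · have hl1 : l + 1 = p := by omega
          refine Finset.mem_image.mpr ⟨0, Finset.mem_range.mpr hppos, ?_⟩
          rw [← hlw, ← Function.iterate_succ_apply' g l y]
          have h2 : l.succ = p := by omega
          rw [h2, hyy]
          simp
    have hrO : r ∉ O := by
      intro hr
      obtain ⟨j, -, hj⟩ := Finset.mem_image.mp hr
      exact hv₀ (j + m₁) (by rw [Function.iterate_add_apply]; exact hj)
    have hmapsto : ∀ w ∈ O, g w ∈ O := by
      intro w hw
      have := horbit w hw 1
      simpa using this
    have hsurj : ∀ w ∈ O, ∃ v ∈ O, g v = w := by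
      intro w hw
      obtain ⟨j, hj, hjw⟩ := Finset.mem_image.mp hw
      rw [Finset.mem_range] at hj
      rcases Nat.eq_zero_or_pos j with h | h
      · refine ⟨g^[p-1] y, Finset.mem_image.mpr ⟨p-1, Finset.mem_range.mpr (by omega), rfl⟩, ?_⟩
        rw [← Function.iterate_succ_apply' g (p-1) y]
        have h2 : (p-1).succ = p := by omega
        rw [h2, hyy, ← hjw, h]
        simp
      · refine ⟨g^[j-1] y, Finset.mem_image.mpr ⟨j-1, Finset.mem_range.mpr (by omega), rfl⟩, ?_⟩
        rw [← Function.iterate_succ_apply' g (j-1) y]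
        have h2 : (j-1).succ = j := by omega
        rw [h2, hjw]
    have hinj : Set.InjOn g O := by
      have hmt : Set.MapsTo g O O := fun w hw => hmapsto w hw
      have hs : Set.SurjOn g O O := by
        intro w hw
        obtain ⟨v, hv, hgv⟩ := hsurj w hw
        exact ⟨v, hv, hgv⟩
      exact ((Set.Finite.surjOn_iff_bijOn_of_mapsTo (O.finite_toSet) hmt).mp hs).injOn
    have hcard : ∀ w, (O.filter (fun v => g v = w)).card = if w ∈ O then 1 else 0 := by
      intro w
      by_cases hw : w ∈ O
      · rw [if_pos hw]
        obtain ⟨v, hv, hgv⟩ := hsurj w hw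
        rw [Finset.card_eq_one]
        refine ⟨v, ?_⟩
        ext z
        simp only [Finset.mem_filter, Finset.mem_singleton]
        constructor
        · rintro ⟨hz, hgz⟩
          exact hinj hz hv (by rw [hgz, hgv])
        · rintro rfl; exact ⟨hv, hgv⟩
      · rw [if_neg hw, Finset.card_eq_zero]
        rw [Finset.filter_eq_empty_iff]
        rintro v hv rfl
        exact hw (hmapsto v hv)
    set x : W → ℚ := fun w => if w ∈ O then 1 else 0 with hx
    have hyO : y ∈ O := Finset.mem_image.mpr ⟨0, Finset.mem_range.mpr hppos, by simp⟩
    have hx0 : x ≠ 0 := by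
      intro h
      have := congrFun h y
      rw [hx] at this
      simp [hyO] at this
    have hvm : Matrix.vecMul x N = 0 := by
      funext w
      have : Matrix.vecMul x N w = ∑ v, x v * N v w := by
        simp [Matrix.vecMul, dotProduct]
      rw [this]
      have : ∀ v, x v * N v w
          = (if v ∈ O then (if v = w then (1:ℚ) else 0) else 0)
            - (if v ∈ O ∧ g v = w then 1 else 0) := by
        intro v
        rw [hN, hx]
        by_cases hv : v ∈ O
        · have hvr : v ≠ r := fun h => hrO (h ▸ hv)
          simp only [if_pos hv, one_mul, hv, true_and]
          congr 1
          by_cases hgv : g v = w <;> simp [hgv, hvr]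
        · simp [hv]
      rw [Finset.sum_congr rfl (fun v _ => this v), Finset.sum_sub_distrib]
      have h1 : ∑ v, (if v ∈ O then (if v = w then (1:ℚ) else 0) else 0)
          = if w ∈ O then 1 else 0 := by
        have : ∀ v : W, (if v ∈ O then (if v = w then (1:ℚ) else 0) else 0)
            = if v = w then (if w ∈ O then (1:ℚ) else 0) else 0 := by
          intro v
          by_cases hvw : v = w
          · subst hvw; simp
          · simp [hvw]
        rw [Finset.sum_congr rfl (fun v _ => this v), Finset.sum_ite_eq' Finset.univ w]
        simp
      have h2 : ∑ v, (if v ∈ O ∧ g v = w then (1:ℚ) else 0)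
          = ((O.filter (fun v => g v = w)).card : ℚ) := by
        rw [Finset.sum_boole]
        norm_cast
        congr 1
        ext v
        simp [Finset.mem_filter]
      rw [h1, h2, hcard w]
      by_cases hw : w ∈ O <;> simp [hw]
    rw [← Matrix.exists_vecMul_eq_zero_iff]
    exact ⟨x, hx0, hvm⟩

/-- The directed Matrix-Tree theorem for spanning trees oriented toward the root `r`. -/
theorem mtt (F : Finset (W × W)) (r : W) :
    ((Lap F).updateRow r (Pi.single r 1)).det = (kappa F r : ℚ) := by
  classical
  set A : W → Finset (W × W) := fun v => if v = r then {(r, r)} else F.filter (fun e => e.1 = v)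
    with hA
  set grow : W → (W × W) → (W → ℚ) := fun v e =>
    if v = r then Pi.single r 1
    else (fun w => (if v = w then 1 else 0) - (if e.2 = w then 1 else 0)) with hgrow
  have hrows : ∀ v, ((Lap F).updateRow r (Pi.single r 1)) v = ∑ e ∈ A v, grow v e := by
    intro v
    by_cases hv : v = r
    · subst hv
      simp [hA, hgrow, Matrix.updateRow_self]
    · funext w
      rw [Matrix.updateRow_ne hv]
      simp only [hA, hgrow, if_neg hv]
      rw [Finset.sum_apply]
      rw [Finset.sum_sub_distrib]
      have h1 : ∑ e ∈ F.filter (fun e => e.1 = v), (if v = w then (1:ℚ) else 0)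
          = (outdeg F v : ℚ) * (if v = w then 1 else 0) := by
        rw [Finset.sum_const, outdeg]
        simp [mul_comm]
      have h2 : ∑ e ∈ F.filter (fun e => e.1 = v), (if e.2 = w then (1:ℚ) else 0)
          = if (v, w) ∈ F then 1 else 0 := by
        rw [Finset.sum_filter]
        have : ∀ e : W × W, (if e.1 = v then (if e.2 = w then (1:ℚ) else 0) else 0)
            = if e = (v, w) then 1 else 0 := by
          intro e
          by_cases h1 : e.1 = v <;> by_cases h2 : e.2 = w <;>
            simp [h1, h2, Prod.ext_iff]
        rw [Finset.sum_congr rfl (fun e _ => this e), Finset.sum_ite_eq' F (v, w)]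
      rw [h1, h2, Lap]
      simp only [Matrix.of_apply]
      by_cases hvw : v = w <;> simp [hvw]
  have hdet : ((Lap F).updateRow r (Pi.single r 1)).det
      = ∑ p ∈ Fintype.piFinset A, (Matrix.of fun v => grow v (p v)).det := by
    have key := (Matrix.detRowAlternating :
      (W → ℚ) [⋀^W]→ₗ[ℚ] ℚ).toMultilinearMap.map_sum_finset grow A
    have : ((Lap F).updateRow r (Pi.single r 1)).det
        = Matrix.detRowAlternating (fun v => ∑ e ∈ A v, grow v e) := by
      rw [show (fun v => ∑ e ∈ A v, grow v e) = ((Lap F).updateRow r (Pi.single r 1)) from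
        funext fun v => (hrows v).symm]
      rfl
    rw [this]
    exact key
  rw [hdet]
  set Gp : (W → W × W) → (W → W) := fun p => fun v => if v = r then r else (p v).2 with hGp
  have hterm : ∀ p ∈ Fintype.piFinset A,
      (Matrix.of fun v => grow v (p v)).det = if IsSpanTree F r (Gp p) then 1 else 0 := by
    intro p hp
    rw [Fintype.mem_piFinset] at hp
    have hNdef : ∀ v w, (Matrix.of fun v => grow v (p v)) v w
        = (if v = w then 1 else 0) - (if v ≠ r ∧ (Gp p) v = w then 1 else 0) := by
      intro v w
      simp only [Matrix.of_apply, hgrow, hGp]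
      by_cases hv : v = r
      · subst hv
        simp [Pi.single_apply, eq_comm]
      · simp [hv]
    rw [det_choice r (Gp p) _ hNdef]
    congr 1
    have h1 : Gp p r = r := by simp [hGp]
    have h2 : ∀ v, v ≠ r → (v, Gp p v) ∈ F := by
      intro v hv
      have := hp v
      rw [hA] at this
      simp only [if_neg hv, Finset.mem_filter] at this
      have hfst : (p v).1 = v := this.2
      have : ((p v).1, (p v).2) ∈ F := by simpa using this.1
      rw [hfst] at this
      simpa [hGp, hv] using this
    rw [eq_iff_iff]
    constructor
    · intro h
      exact ⟨h1, h2, h⟩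
    · intro h
      exact h.2.2
  rw [Finset.sum_congr rfl hterm, Finset.sum_boole]
  have hcard : ((Fintype.piFinset A).filter fun p => IsSpanTree F r (Gp p)).card
      = (Finset.univ.filter fun f : W → W => IsSpanTree F r f).card := by
    apply Finset.card_bij (fun p _ => Gp p)
    · intro p hp
      rw [Finset.mem_filter] at hp
      exact Finset.mem_filter.mpr ⟨Finset.mem_univ _, hp.2⟩
    · intro p₁ hp₁ p₂ hp₂ heq
      rw [Finset.mem_filter, Fintype.mem_piFinset] at hp₁ hp₂
      funext v
      by_cases hv : v = r
      · have h1 := hp₁.1 v; have h2 := hp₂.1 v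
        rw [hA] at h1 h2
        simp only [if_pos hv, Finset.mem_singleton] at h1 h2
        rw [h1, h2]
      · have h1 := hp₁.1 v; have h2 := hp₂.1 v
        rw [hA] at h1 h2
        simp only [if_neg hv, Finset.mem_filter] at h1 h2
        have hval : (p₁ v).2 = (p₂ v).2 := by
          have := congrFun heq v
          simpa [hGp, if_neg hv] using this
        exact Prod.ext (h1.2.trans h2.2.symm) hval
    · intro f hf
      rw [Finset.mem_filter] at hf
      have hT := hf.2
      refine ⟨fun v => if v = r then (r, r) else (v, f v), ?_, ?_⟩
      · rw [Finset.mem_filter, Fintype.mem_piFinset]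
        have hGpf : Gp (fun v => if v = r then (r, r) else (v, f v)) = f := by
          funext v
          by_cases hv : v = r
          · rw [hGp]
            simp only [if_pos hv]
            rw [hv, hT.1]
          · simp [hGp, hv]
        refine ⟨?_, by rw [hGpf]; exact hT⟩
        intro v
        rw [hA]
        by_cases hv : v = r
        · simp [hv]
        · simp only [if_neg hv, Finset.mem_filter]
          exact ⟨hT.2.1 v hv, trivial⟩
      · funext v
        by_cases hv : v = r
        · rw [hGp]
          simp only [if_pos hv]
          rw [hv, hT.1]
        · simp [hGp, hv]
  rw [hcard]
  have hk : kappa F r = (Finset.univ.filter fun f : W → W => IsSpanTree F r f).card := by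
    rw [kappa, Nat.card_eq_fintype_card, Fintype.card_subtype]
  rw [hk]

lemma det_updateRow_single_congr (M M' : Matrix W W ℚ) (i : W)
    (h : ∀ v w, v ≠ i → w ≠ i → M v w = M' v w) :
    (M.updateRow i (Pi.single i 1)).det = (M'.updateRow i (Pi.single i 1)).det := by
  rw [Matrix.det_apply', Matrix.det_apply']
  apply Finset.sum_congr rfl
  intro σ _
  by_cases hσ : σ i = i
  · congr 1
    apply Finset.prod_congr rfl
    intro w _
    by_cases hw : w = i
    · subst hw
      rw [hσ, Matrix.updateRow_self, Matrix.updateRow_self]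
    · have hσw : σ w ≠ i := fun hc => hw (σ.injective (hc.trans hσ.symm))
      rw [Matrix.updateRow_ne hσw, Matrix.updateRow_ne hσw]
      exact h _ _ hσw hw
  · have key : ∀ X : Matrix W W ℚ,
        (∏ w, (X.updateRow i (Pi.single i 1)) (σ w) w) = 0 := by
      intro X
      have hji : σ.symm i ≠ i := fun hc => hσ (by conv_lhs => rw [← hc, Equiv.apply_symm_apply])
      refine Finset.prod_eq_zero (Finset.mem_univ (σ.symm i)) ?_
      rw [Equiv.apply_symm_apply, Matrix.updateRow_self, Pi.single_apply, if_neg hji]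
    rw [key M, key M']

lemma punch_comm (M : Matrix W W ℚ) (i : W) :
    ((Mᵀ.updateCol i (Pi.single i 1)).updateRow i (Pi.single i 1))
      = ((M.updateCol i (Pi.single i 1)).updateRow i (Pi.single i 1))ᵀ := by
  ext v w
  by_cases hv : v = i <;> by_cases hw : w = i <;>
    simp [Matrix.updateRow_apply, Matrix.updateCol_apply, hv, hw, Pi.single_apply]

lemma det_updateColumn_single (M : Matrix W W ℚ) (i : W) :
    (M.updateCol i (Pi.single i 1)).det = (M.updateRow i (Pi.single i 1)).det := by
  have congr1 : ∀ X : Matrix W W ℚ,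
      (X.updateRow i (Pi.single i 1)).det
        = ((X.updateCol i (Pi.single i 1)).updateRow i (Pi.single i 1)).det := by
    intro X
    apply det_updateRow_single_congr
    intro v w hv hw
    rw [Matrix.updateCol_apply, if_neg hw]
  have h1 : (M.updateCol i (Pi.single i 1)).det = (Mᵀ.updateRow i (Pi.single i 1)).det := by
    rw [Matrix.updateRow_transpose, Matrix.det_transpose]
  rw [h1, congr1, punch_comm, Matrix.det_transpose, ← congr1]

end Aux

section Deg

variable {V : Type*} [Fintype V] [DecidableEq V]

lemma card_out (E : Finset (V × V)) (v : V) :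
    (Finset.univ.filter fun w => (v, w) ∈ E).card = outdeg E v := by
  rw [outdeg]
  apply Finset.card_bij (fun w _ => (v, w))
  · intro w hw
    rw [Finset.mem_filter] at hw ⊢
    exact ⟨hw.2, rfl⟩
  · intro w₁ _ w₂ _ h
    exact (Prod.ext_iff.mp h).2
  · intro e he
    rw [Finset.mem_filter] at he
    refine ⟨e.2, Finset.mem_filter.mpr ⟨Finset.mem_univ _, ?_⟩, ?_⟩
    · rw [← he.2]; exact he.1
    · exact Prod.ext_iff.mpr ⟨he.2.symm, rfl⟩

lemma outdeg_cast_eq_sum (E : Finset (V × V)) (v : V) :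
    (outdeg E v : ℚ) = ∑ w, (if (v, w) ∈ E then (1:ℚ) else 0) := by
  rw [Finset.sum_boole, card_out]

lemma mem_blowup_iff (E : Finset (V × V)) (k : ℕ) (s t : V × Fin k) :
    ((s, t) ∈ blowup E k) ↔ (s.1, t.1) ∈ E := by
  simp [blowup]

lemma outdeg_blowup (E : Finset (V × V)) (k : ℕ) (s : V × Fin k) :
    outdeg (blowup E k) s = outdeg E s.1 * k := by
  have h1 : (Finset.univ.filter fun t : V × Fin k => (s, t) ∈ blowup E k)
      = (Finset.univ.filter fun x : V => (s.1, x) ∈ E) ×ˢ (Finset.univ : Finset (Fin k)) := by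
    ext t
    simp [Finset.mem_product, mem_blowup_iff]
  rw [← card_out (blowup E k) s, h1, Finset.card_product, card_out]
  simp

lemma card_class {k : ℕ} (u : V × Fin k) (w : V) :
    (Finset.univ.filter fun t : V × Fin k => t.1 = w ∧ t ≠ u).card
      = k - (if w = u.1 then 1 else 0) := by
  have h1 : (Finset.univ.filter fun t : V × Fin k => t.1 = w ∧ t ≠ u)
      = (Finset.univ.filter fun t : V × Fin k => t.1 = w).erase u := by
    ext t
    simp only [Finset.mem_erase, Finset.mem_filter, Finset.mem_univ, true_and]
    tauto
  have h2 : (Finset.univ.filter fun t : V × Fin k => t.1 = w).card = k := by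
    have : (Finset.univ.filter fun t : V × Fin k => t.1 = w)
        = {w} ×ˢ (Finset.univ : Finset (Fin k)) := by
      ext t
      simp only [Finset.mem_filter, Finset.mem_univ, true_and, Finset.mem_product,
        Finset.mem_singleton]
      constructor
      · intro h; exact ⟨h, trivial⟩
      · intro h; exact h.1
    rw [this, Finset.card_product]
    simp
  rw [h1]
  by_cases hu : w = u.1
  · rw [if_pos hu, Finset.card_erase_of_mem, h2]
    rw [Finset.mem_filter]
    exact ⟨Finset.mem_univ _, hu.symm⟩
  · have hnm : u ∉ Finset.univ.filter (fun t : V × Fin k => t.1 = w) := by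
      rw [Finset.mem_filter]
      rintro ⟨-, h⟩
      exact hu h.symm
    rw [if_neg hu, Finset.erase_eq_of_notMem hnm, h2]
    omega

end Deg


/-- For a digraph `G` on `n` vertices with every outdegree positive, and any vertex `u`
in the copy-class `V_i` of the `k`-blow-up `G(k)`, the number of oriented spanning trees
of `G(k)` rooted at `u` equals `k^(nk-2) · (∏_v d⁺(v)^(k-1)) · κ_i(G)`. -/
theorem stmt11 {n : ℕ} (E : Finset (Fin n × Fin n)) (hdeg : ∀ v, 0 < outdeg E v)
    (k : ℕ) (hk : 0 < k) (i : Fin n) (a : Fin k) :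
    kappa (blowup E k) (i, a) =
      k ^ (n * k - 2) * (∏ v, outdeg E v ^ (k - 1)) * kappa E i := by
  classical
  have hn : 0 < n := i.pos
  have hk0 : (k : ℚ) ≠ 0 := Nat.cast_ne_zero.mpr hk.ne'
  set u : Fin n × Fin k := (i, a) with hu
  set d : Fin n → ℚ := fun v => (outdeg E v : ℚ) with hd
  have hdne : ∀ v, d v ≠ 0 := fun v => Nat.cast_ne_zero.mpr (hdeg v).ne'
  have hkd : ∀ v, (k : ℚ) * d v ≠ 0 := fun v => mul_ne_zero hk0 (hdne v)
  set A : Matrix (Fin n) (Fin n) ℚ := Matrix.of fun v w => if (v, w) ∈ E then 1 else 0 with hA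
  set Δ : Matrix (Fin n × Fin k) (Fin n × Fin k) ℚ :=
    Matrix.diagonal (fun s => if s = u then 1 else (k : ℚ) * d s.1) with hΔ
  set B : Matrix (Fin n × Fin k) (Fin n) ℚ :=
    Matrix.of fun s v => if s ≠ u ∧ s.1 = v then -(((k : ℚ) * d s.1)⁻¹) else 0 with hB
  set C : Matrix (Fin n) (Fin n × Fin k) ℚ := Matrix.of fun v t => A v t.1 with hC
  -- Step A : factorization of the punched blow-up Laplacian
  have hfac : (Lap (blowup E k)).updateRow u (Pi.single u 1) = Δ * (1 + B * C) := by
    ext s t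
    rw [hΔ, Matrix.diagonal_mul]
    have hBC : (B * C) s t = if s ≠ u then -(((k:ℚ) * d s.1)⁻¹) * A s.1 t.1 else 0 := by
      rw [Matrix.mul_apply]
      have key : ∀ v, B s v * C v t
          = if v = s.1 then (if s ≠ u then -(((k:ℚ) * d s.1)⁻¹) * A s.1 t.1 else 0) else 0 := by
        intro v
        rw [hB, hC]
        simp only [Matrix.of_apply]
        by_cases hv : v = s.1
        · subst hv
          by_cases hs : s = u <;> simp [hs]
        · have : ¬ (s ≠ u ∧ s.1 = v) := fun h => hv h.2.symm
          simp [this, hv]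
      rw [Finset.sum_congr rfl (fun v _ => key v), Finset.sum_ite_eq' Finset.univ s.1]
      simp
    by_cases hs : s = u
    · rw [hs] at hBC
      rw [hs, Matrix.updateRow_self, Matrix.add_apply, hBC]
      simp [Pi.single_apply, Matrix.one_apply, eq_comm]
    · rw [Matrix.updateRow_ne hs, Matrix.add_apply, hBC, if_pos hs, if_neg hs]
      rw [Lap]
      simp only [Matrix.of_apply]
      have hdeg' : (outdeg (blowup E k) s : ℚ) = d s.1 * k := by
        rw [outdeg_blowup]
        push_cast
        rfl
      have hmem : (if (s, t) ∈ blowup E k then (1:ℚ) else 0) = A s.1 t.1 := by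
        rw [hA]
        simp only [Matrix.of_apply]
        by_cases h : (s.1, t.1) ∈ E
        · rw [if_pos h, if_pos ((mem_blowup_iff E k s t).mpr h)]
        · rw [if_neg h, if_neg (fun hc => h ((mem_blowup_iff E k s t).mp hc))]
      rw [hdeg', hmem, Matrix.one_apply]
      have h1 : (↑k * d s.1) * (-(↑k * d s.1)⁻¹ * A s.1 t.1) = -A s.1 t.1 := by
        rw [neg_mul, mul_neg, neg_inj, ← mul_assoc, mul_inv_cancel₀ (hkd s.1), one_mul]
      by_cases hst : s = t
      · rw [if_pos hst, if_pos hst, mul_add, h1]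
        ring
      · rw [if_neg hst, if_neg hst, mul_add, h1]
        ring
  have hdrw : ∀ v, ((outdeg E v : ℕ) : ℚ) = d v := fun _ => rfl
  -- determinant via Weinstein–Aronszajn
  have hdet1 : ((Lap (blowup E k)).updateRow u (Pi.single u 1)).det
      = Δ.det * (1 + C * B).det := by
    rw [hfac, Matrix.det_mul, Matrix.det_one_add_mul_comm]
  -- Step B : the determinant of Δ
  have hΔdet2 : ((k:ℚ) * d i) * Δ.det = ∏ v, ((k:ℚ) * d v) ^ k := by
    have e1 : Δ.det = ∏ s ∈ Finset.univ.erase u, ((k:ℚ) * d s.1) := by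
      rw [hΔ, Matrix.det_diagonal,
        ← Finset.mul_prod_erase Finset.univ _ (Finset.mem_univ u), if_pos rfl, one_mul]
      exact Finset.prod_congr rfl (fun s hs => if_neg (Finset.mem_erase.mp hs).1)
    have e2 : ((k:ℚ) * d i) = ((k:ℚ) * d u.1) := rfl
    have e3 : ∏ s : Fin n × Fin k, ((k:ℚ) * d s.1) = ∏ v, ((k:ℚ) * d v) ^ k := by
      rw [Fintype.prod_prod_type]
      apply Finset.prod_congr rfl
      intro v _
      simp [Finset.prod_const, Finset.card_univ]
    rw [e1, e2, Finset.mul_prod_erase Finset.univ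
      (fun s : Fin n × Fin k => (k:ℚ) * d s.1) (Finset.mem_univ u), e3]
  -- Step C : computing 1 + C * B
  set c : Fin n → ℚ := fun w => ((k : ℚ) - if w = i then 1 else 0) * (((k:ℚ) * d w)⁻¹) with hc
  set Y : Matrix (Fin n) (Fin n) ℚ :=
    Matrix.of fun v w => (if v = w then (1:ℚ) else 0) - A v w * c w with hY
  have hCB : 1 + C * B = Y := by
    ext v w
    rw [Matrix.add_apply, Matrix.mul_apply, Matrix.one_apply, hY]
    simp only [Matrix.of_apply]
    have key : ∀ t : Fin n × Fin k, C v t * B t w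
        = if t.1 = w ∧ t ≠ u then -(A v w * ((k:ℚ) * d w)⁻¹) else 0 := by
      intro t
      rw [hB, hC]
      simp only [Matrix.of_apply]
      by_cases h1 : t.1 = w
      · by_cases h2 : t = u
        · have hno : ¬ (t ≠ u ∧ t.1 = w) := fun h => h.1 h2
          have hno2 : ¬ (t.1 = w ∧ t ≠ u) := fun h => h.2 h2
          simp [hno, hno2]
        · rw [if_pos ⟨h2, h1⟩, if_pos ⟨h1, h2⟩, h1]
          ring
      · have hnb : ¬ (t.1 = w ∧ t ≠ u) := fun h => h1 h.1
        have hna' : ¬ (t ≠ u ∧ t.1 = w) := fun h => h1 h.2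
        simp [hna', hnb]
    rw [Finset.sum_congr rfl (fun t _ => key t), Finset.sum_ite, Finset.sum_const,
      Finset.sum_const_zero, add_zero, card_class u w]
    have hcast : ((k - if w = u.1 then 1 else 0 : ℕ) : ℚ)
        = (k:ℚ) - (if w = i then 1 else 0) := by
      have hui : u.1 = i := rfl
      rw [hui]
      by_cases hw : w = i
      · rw [if_pos hw, if_pos hw, Nat.cast_sub hk, Nat.cast_one]
      · rw [if_neg hw, if_neg hw, Nat.cast_sub (by omega), Nat.cast_zero]
    rw [nsmul_eq_mul, hcast, hc]
    ring
  -- Step D : evaluating det Y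
  set Z : Matrix (Fin n) (Fin n) ℚ :=
    Matrix.of fun v w => (if v = w then (1:ℚ) else 0) - A v w * (d w)⁻¹ with hZ
  have hZdet : Z.det = 0 := by
    have hZL : Z = Lap E * Matrix.diagonal (fun w => (d w)⁻¹) := by
      ext v w
      rw [Matrix.mul_diagonal, hZ, Lap]
      simp only [Matrix.of_apply, hA]
      by_cases hvw : v = w
      · rw [if_pos hvw, if_pos hvw, hvw, hdrw w, sub_mul, mul_inv_cancel₀ (hdne w)]
      · rw [if_neg hvw, if_neg hvw, zero_sub, zero_sub, neg_mul]
    rw [hZL, Matrix.det_mul]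
    have hL0 : (Lap E).det = 0 := by
      rw [← Matrix.exists_mulVec_eq_zero_iff]
      refine ⟨fun _ => 1, ?_, ?_⟩
      · intro h
        have := congrFun h i
        simp at this
      · funext v
        rw [Matrix.mulVec]
        simp only [dotProduct, Lap, Matrix.of_apply, mul_one]
        rw [Finset.sum_sub_distrib]
        rw [Finset.sum_ite_eq Finset.univ v (fun _ => (outdeg E v : ℚ)),
          ← outdeg_cast_eq_sum]
        simp
    rw [hL0, zero_mul]
  have hupd1 : Y = Z.updateCol i ((fun v => Z v i) + ((k:ℚ) * d i)⁻¹ • (fun v => A v i)) := by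
    ext v w
    rw [Matrix.updateCol_apply]
    by_cases hw : w = i
    · rw [if_pos hw, hY, hZ]
      simp only [Matrix.of_apply, Pi.add_apply, Pi.smul_apply, smul_eq_mul]
      rw [hw]
      have hci : c i = (d i)⁻¹ - ((k:ℚ) * d i)⁻¹ := by
        show ((k : ℚ) - if i = i then 1 else 0) * (((k:ℚ) * d i)⁻¹) = _
        rw [if_pos rfl]
        have h5 : d i ≠ 0 := hdne i
        field_simp
      rw [hci]
      ring
    · rw [if_neg hw, hY, hZ]
      simp only [Matrix.of_apply]
      have hcw : c w = (d w)⁻¹ := by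
        show ((k : ℚ) - if w = i then 1 else 0) * (((k:ℚ) * d w)⁻¹) = _
        rw [if_neg hw, sub_zero, mul_inv, ← mul_assoc, mul_inv_cancel₀ hk0, one_mul]
      rw [hcw]
  have hYdet : Y.det = Z.det + ((k:ℚ) * d i)⁻¹ * (Z.updateCol i (fun v => A v i)).det := by
    rw [hupd1, Matrix.det_updateCol_add, Matrix.det_updateCol_smul,
      Matrix.updateCol_eq_self]
  have hAcol : (Z.updateCol i (fun v => A v i)).det
      = d i * (Z.updateCol i (Pi.single i 1)).det := by
    have hfun : (fun v => A v i)
        = (d i) • ((Pi.single i 1 : Fin n → ℚ)) + (-1 : ℚ) • (fun v => Lap E v i) := by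
      funext v
      simp only [Pi.add_apply, Pi.smul_apply, smul_eq_mul, Pi.single_apply, Lap,
        Matrix.of_apply, hA]
      by_cases hv : v = i
      · rw [if_pos hv, if_pos hv, hv, hdrw i]
        ring
      · rw [if_neg hv, if_neg hv]
        ring
    rw [hfun, Matrix.det_updateCol_add, Matrix.det_updateCol_smul,
      Matrix.det_updateCol_smul]
    have hcol0 : (Z.updateCol i (fun v => Lap E v i)).det = 0 := by
      have hLapZ : (fun v => Lap E v i) = (d i) • (fun v => Z v i) := by
        funext v
        simp only [Pi.smul_apply, smul_eq_mul, Lap, hZ, Matrix.of_apply, hA]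
        by_cases hv : v = i
        · rw [if_pos hv, if_pos hv, hv, hdrw i, mul_sub, mul_one, mul_left_comm,
            mul_inv_cancel₀ (hdne i), mul_one]
        · rw [if_neg hv, if_neg hv, zero_sub, zero_sub, mul_neg, mul_left_comm,
            mul_inv_cancel₀ (hdne i), mul_one]
      rw [hLapZ, Matrix.det_updateCol_smul, Matrix.updateCol_eq_self, hZdet, mul_zero]
    rw [hcol0]
    ring
  have h3rd : (Z.updateCol i (Pi.single i 1)).det
      = d i * ((Lap E).updateRow i (Pi.single i 1)).det * ∏ v, (d v)⁻¹ := by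
    have hfac2 : Z.updateCol i (Pi.single i 1)
        = ((Lap E).updateCol i ((d i) • (Pi.single i 1 : Fin n → ℚ)))
          * Matrix.diagonal (fun w => (d w)⁻¹) := by
      ext v w
      rw [Matrix.mul_diagonal]
      by_cases hw : w = i
      · rw [Matrix.updateCol_apply, Matrix.updateCol_apply, if_pos hw, if_pos hw]
        simp only [Pi.smul_apply, smul_eq_mul, Pi.single_apply]
        rw [hw]
        by_cases hv : v = i
        · rw [if_pos hv, mul_one, mul_inv_cancel₀ (hdne i)]
        · rw [if_neg hv, mul_zero, zero_mul]
      · rw [Matrix.updateCol_apply, Matrix.updateCol_apply, if_neg hw, if_neg hw, hZ, Lap]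
        simp only [Matrix.of_apply, hA]
        by_cases hvw : v = w
        · rw [if_pos hvw, if_pos hvw, hvw, hdrw w, sub_mul, mul_inv_cancel₀ (hdne w)]
        · rw [if_neg hvw, if_neg hvw, zero_sub, zero_sub, neg_mul]
    rw [hfac2, Matrix.det_mul, Matrix.det_diagonal, Matrix.det_updateCol_smul,
      det_updateColumn_single]
  -- the two Matrix-Tree applications
  have hmtt1 : ((Lap (blowup E k)).updateRow u (Pi.single u 1)).det
      = (kappa (blowup E k) u : ℚ) := mtt _ u
  have hmtt2 : ((Lap E).updateRow i (Pi.single i 1)).det = (kappa E i : ℚ) := mtt E i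
  -- assembling
  have hΔval : Δ.det = (∏ v, ((k:ℚ) * d v) ^ k) / ((k:ℚ) * d i) := by
    rw [eq_div_iff (hkd i), mul_comm]
    exact hΔdet2
  have hfinal : (kappa (blowup E k) u : ℚ)
      = ((∏ v, ((k:ℚ) * d v) ^ k) / ((k:ℚ) * d i))
        * (((k:ℚ) * d i)⁻¹ * (d i * (d i * ((kappa E i : ℚ) * ∏ v, (d v)⁻¹)))) := by
    rw [← hmtt1, hdet1, hCB, hYdet, hZdet, hAcol, h3rd, hmtt2, hΔval, zero_add]
    ring
  have hprod1 : ∏ v, ((k:ℚ) * d v) ^ k = (k:ℚ) ^ (n * k) * ∏ v, d v ^ k := by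
    simp only [mul_pow]
    rw [Finset.prod_mul_distrib, Finset.prod_const, Finset.card_univ, Fintype.card_fin,
      ← pow_mul, mul_comm k n]
  have hprod2 : ∏ v, (d v : ℚ) ^ k = (∏ v, d v ^ (k - 1)) * ∏ v, d v := by
    rw [← Finset.prod_mul_distrib]
    apply Finset.prod_congr rfl
    intro v _
    rw [← pow_succ]
    congr 1
    omega
  have hpow2 : (k:ℚ) ^ (n * k) = (k:ℚ) ^ (n * k - 2) * (k:ℚ) ^ 2 := by
    rcases Nat.lt_or_ge k 2 with h | h
    · have hk1 : k = 1 := by omega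
      subst hk1
      simp
    · rw [← pow_add]
      congr 1
      have h2 : k ≤ n * k := Nat.le_mul_of_pos_left k hn
      omega
  have hinvprod : ∏ v, (d v)⁻¹ = (∏ v, d v)⁻¹ := by
    rw [← Finset.prod_inv_distrib]
  have h3 : (∏ v, d v) ≠ 0 := Finset.prod_ne_zero_iff.mpr (fun v _ => hdne v)
  have hfinal2 : (kappa (blowup E k) u : ℚ)
      = (k:ℚ) ^ (n * k - 2) * (∏ v, d v ^ (k - 1)) * (kappa E i : ℚ) := by
    rw [hfinal, hprod1, hprod2, hpow2, hinvprod]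
    have h4 : (k:ℚ) * d i ≠ 0 := hkd i
    have h5 : d i ≠ 0 := hdne i
    field_simp
  simp only [hd] at hfinal2
  exact_mod_cast hfinal2
end

section
/- Let G be a connected Eulerian digraph (every vertex has equal indegree and outdegree, all positive). Then the number of oriented spanning trees rooted at u is the same for every vertex u of G. -/
/-! A digraph on a finite vertex type `V` is given by its edge set `E : Finset (V × V)`. -/

variable {V : Type*} [Fintype V] [DecidableEq V]

/-! ### Auxiliary development for `stmt12`: the directed matrix-tree theorem
for Eulerian digraphs, via the adjugate of the Laplacian. -/

open Matrix Finset

namespace Stmt12Aux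

variable (E : Finset (V × V))

/-- The (out-degree) Laplacian of the digraph, over `ℚ`. -/
noncomputable def lap : Matrix V V ℚ :=
  fun i j => (outdeg E i : ℚ) * (if i = j then 1 else 0) - (if (i, j) ∈ E then 1 else 0)

/-- Out-neighbours of a vertex. -/
def outs (i : V) : Finset V := Finset.univ.filter fun j => (i, j) ∈ E

/-- In-neighbours of a vertex. -/
def ins (j : V) : Finset V := Finset.univ.filter fun i => (i, j) ∈ E

lemma outs_card (i : V) : (outs E i).card = outdeg E i := by
  classical
  unfold outs outdeg
  apply Finset.card_bij (fun j _ => (i, j))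
  · intro a ha; simp_all
  · intro a ha b hb h; simpa using congrArg Prod.snd h
  · intro e he; simp only [mem_filter] at he
    refine ⟨e.2, by simp; rw [show (i, e.2) = e by rw [← he.2]]; exact he.1, by rw [← he.2]⟩

lemma ins_card (j : V) : (ins E j).card = indeg E j := by
  classical
  unfold ins indeg
  apply Finset.card_bij (fun i _ => (i, j))
  · intro a ha; simp_all
  · intro a ha b hb h; simpa using congrArg Prod.fst h
  · intro e he; simp only [mem_filter] at he
    refine ⟨e.1, by simp; rw [show (e.1, j) = e by rw [← he.2]]; exact he.1, by rw [← he.2]⟩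

lemma sum_ite_mem_outs (i : V) (x : V → ℚ) :
    ∑ j, (if (i, j) ∈ E then x j else 0) = ∑ j ∈ outs E i, x j := by
  rw [outs, Finset.sum_filter]

lemma sum_ite_mem_ins (j : V) (x : V → ℚ) :
    ∑ i, (if (i, j) ∈ E then x i else 0) = ∑ i ∈ ins E j, x i := by
  rw [ins, Finset.sum_filter]

lemma row_sum_lap (i : V) : ∑ j, lap E i j = 0 := by
  unfold lap
  rw [Finset.sum_sub_distrib]
  have h1 : ∑ j, (outdeg E i : ℚ) * (if i = j then 1 else 0) = outdeg E i := by
    simp [Finset.sum_ite_eq]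
  have h2 : ∑ j, (if (i, j) ∈ E then (1:ℚ) else 0) = (outs E i).card := by
    rw [sum_ite_mem_outs]; simp
  rw [h1, h2, outs_card]; ring

lemma mulVec_lap (x : V → ℚ) (i : V) :
    (lap E).mulVec x i = (outdeg E i : ℚ) * x i - ∑ j ∈ outs E i, x j := by
  unfold lap mulVec dotProduct
  simp only [sub_mul, ite_mul, one_mul, zero_mul, mul_ite, mul_zero]
  rw [Finset.sum_sub_distrib, sum_ite_mem_outs]
  congr 1
  simp [Finset.sum_ite_eq, mul_comm]

lemma vecMul_lap (x : V → ℚ) (j : V) :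
    ((lap E).vecMul x) j = (outdeg E j : ℚ) * x j - ∑ i ∈ ins E j, x i := by
  unfold lap vecMul dotProduct
  simp only [mul_sub, mul_ite, mul_one, mul_zero]
  rw [Finset.sum_sub_distrib, sum_ite_mem_ins]
  congr 1
  simp [Finset.sum_ite_eq, mul_comm]

variable {E}

lemma mulVec_ker_const (hconn : StronglyConnected E)
    (hdeg : ∀ v, outdeg E v = indeg E v ∧ 0 < outdeg E v) (x : V → ℚ)
    (hx : (lap E).mulVec x = 0) (a b : V) : x a = x b := by
  obtain ⟨a₀, -, hmax⟩ := Finset.exists_max_image Finset.univ x ⟨a, Finset.mem_univ a⟩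
  have key : ∀ v, x v = x a₀ → ∀ w ∈ outs E v, x w = x a₀ := by
    intro v hv w hw
    have h0 : (outdeg E v : ℚ) * x v - ∑ j ∈ outs E v, x j = 0 := by
      rw [← mulVec_lap, hx]; rfl
    have hsum : ∑ j ∈ outs E v, (x v - x j) = 0 := by
      rw [Finset.sum_sub_distrib, Finset.sum_const, outs_card, nsmul_eq_mul]
      linarith [h0]
    have hnn : ∀ j ∈ outs E v, 0 ≤ x v - x j := fun j _ => by
      have := hmax j (Finset.mem_univ j); rw [hv]; linarith
    have := (Finset.sum_eq_zero_iff_of_nonneg hnn).1 hsum w hw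
    rw [← hv]; linarith
  have reach : ∀ c, x c = x a₀ := by
    intro c
    have h := hconn a₀ c
    induction h with
    | refl => rfl
    | tail hab hedge ih =>
        exact key _ ih _ (by simp [outs, hedge])
  rw [reach a, reach b]

lemma vecMul_ker_const (hconn : StronglyConnected E)
    (hdeg : ∀ v, outdeg E v = indeg E v ∧ 0 < outdeg E v) (x : V → ℚ)
    (hx : (lap E).vecMul x = 0) (a b : V) : x a = x b := by
  obtain ⟨a₀, -, hmax⟩ := Finset.exists_max_image Finset.univ x ⟨a, Finset.mem_univ a⟩
  have key : ∀ v, x v = x a₀ → ∀ w ∈ ins E v, x w = x a₀ := by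
    intro v hv w hw
    have h0 : (outdeg E v : ℚ) * x v - ∑ j ∈ ins E v, x j = 0 := by
      rw [← vecMul_lap, hx]; rfl
    have hsum : ∑ j ∈ ins E v, (x v - x j) = 0 := by
      rw [Finset.sum_sub_distrib, Finset.sum_const, ins_card, ← (hdeg v).1, nsmul_eq_mul]
      linarith [h0]
    have hnn : ∀ j ∈ ins E v, 0 ≤ x v - x j := fun j _ => by
      have := hmax j (Finset.mem_univ j); rw [hv]; linarith
    have := (Finset.sum_eq_zero_iff_of_nonneg hnn).1 hsum w hw
    rw [← hv]; linarith
  have reach : ∀ c, x c = x a₀ := by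
    intro c
    have h := hconn c a₀
    induction h using Relation.ReflTransGen.head_induction_on with
    | refl => rfl
    | head hedge _ ih =>
        exact key _ ih _ (by simp [ins]; exact hedge)
  rw [reach a, reach b]

/-- All diagonal entries of the adjugate of the Laplacian agree. -/
lemma adj_diag_eq (hconn : StronglyConnected E)
    (hdeg : ∀ v, outdeg E v = indeg E v ∧ 0 < outdeg E v) (u v : V) :
    (adjugate (lap E)) u u = adjugate (lap E) v v := by
  set L : Matrix V V ℚ := lap E with hL
  have hdet : L.det = 0 := by
    rw [← Matrix.exists_mulVec_eq_zero_iff]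
    refine ⟨fun _ => 1, ?_, ?_⟩
    · intro h; have := congrFun h u; simp at this
    · ext i; simpa [Matrix.mulVec, dotProduct] using row_sum_lap E i
  have h1 : L * adjugate L = 0 := by rw [Matrix.mul_adjugate, hdet, zero_smul]
  have h2 : adjugate L * L = 0 := by rw [Matrix.adjugate_mul, hdet, zero_smul]
  have hcol : ∀ j a b, adjugate L a j = adjugate L b j := by
    intro j a b
    refine mulVec_ker_const hconn hdeg (fun i => adjugate L i j) ?_ a b
    ext i
    have := congrFun (congrFun h1 i) j
    simpa [Matrix.mul_apply, Matrix.mulVec, dotProduct] using this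
  have hrowc : ∀ i a b, adjugate L i a = adjugate L i b := by
    intro i a b
    refine vecMul_ker_const hconn hdeg (fun k => adjugate L i k) ?_ a b
    ext j
    have := congrFun (congrFun h2 i) j
    simpa [Matrix.mul_apply, Matrix.vecMul, dotProduct] using this
  calc adjugate L u u = adjugate L v u := hcol u u v
    _ = adjugate L v v := hrowc v u v

/-! ### The combinatorial evaluation of the diagonal adjugate entries. -/

lemma det_one_sub_nilpotent {n : Type*} [Fintype n] [DecidableEq n]
    (N : Matrix n n ℚ) (h : IsNilpotent N) : (1 - N).det = 1 := by
  have h1 : N.charpoly - Polynomial.X ^ (Fintype.card n) = 0 :=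
    (N.isNilpotent_charpoly_sub_pow_of_isNilpotent h).eq_zero
  have h2 : N.charpoly = Polynomial.X ^ (Fintype.card n) := by linear_combination h1
  have h3 : (charmatrix N).map (Polynomial.eval 1) = 1 - N := by
    ext i j
    rcases eq_or_ne i j with rfl | hij <;> simp [charmatrix_apply, one_apply, *]
  have h4 : (1 - N).det = Polynomial.eval 1 N.charpoly := by
    rw [Matrix.charpoly, ← h3, ← Polynomial.coe_evalRingHom, ← RingHom.mapMatrix_apply,
      ← RingHom.map_det]
  rw [h4, h2]; simp

lemma pow_parent (r : V → V) (w : V) (k : ℕ) (i j : V) :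
    ((Matrix.of fun i j => if i = w then 0 else if j = r i then (1:ℚ) else 0) ^ k) i j
      = if (∀ m < k, r^[m] i ≠ w) ∧ j = r^[k] i then 1 else 0 := by
  set N : Matrix V V ℚ := Matrix.of fun i j => if i = w then 0 else if j = r i then (1:ℚ) else 0
    with hN
  induction k generalizing i with
  | zero => simp [Matrix.one_apply, eq_comm]
  | succ k ih =>
      rw [pow_succ', Matrix.mul_apply]
      by_cases hi : i = w
      · have hz : (∑ x : V, N i x * (N ^ k) x j) = 0 :=
          Finset.sum_eq_zero fun x _ => by simp [hN, hi]
        rw [hz, eq_comm, if_neg]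
        rintro ⟨hm, -⟩
        exact hm 0 (Nat.succ_pos _) hi
      · rw [Finset.sum_eq_single (r i)]
        · rw [ih]
          have hNi : N i (r i) = 1 := by simp [hN, hi]
          rw [hNi, one_mul]
          have hiff : (∀ m < k + 1, r^[m] i ≠ w) ↔ (i ≠ w ∧ ∀ m < k, r^[m] (r i) ≠ w) := by
            constructor
            · intro h
              refine ⟨h 0 (Nat.succ_pos _), fun m hm => ?_⟩
              have := h (m+1) (by omega)
              rwa [Function.iterate_succ_apply] at this
            · rintro ⟨h0, h⟩ m hm
              cases m with
              | zero => exact h0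
              | succ m => rw [Function.iterate_succ_apply]; exact h m (by omega)
          rw [Function.iterate_succ_apply]
          simp only [hiff]; simp [hi]
        · intro b _ hb
          simp [hN, hi, hb]
        · intro h; exact absurd (Finset.mem_univ _) h

lemma nilpotent_parent (r : V → V) (w : V) (hreach : ∀ v, ∃ k, r^[k] v = w) :
    IsNilpotent (Matrix.of fun i j => if i = w then 0 else if j = r i then (1:ℚ) else 0) := by
  classical
  set K := (Finset.univ.sup fun i : V => Nat.find (hreach i)) + 1 with hK
  refine ⟨K, ?_⟩
  ext i j
  rw [pow_parent]
  simp only [Matrix.zero_apply]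
  rw [if_neg]
  rintro ⟨hm, -⟩
  have hle : Nat.find (hreach i) ≤ Finset.univ.sup fun i : V => Nat.find (hreach i) := by
    simpa using Finset.le_sup (f := fun i : V => Nat.find (hreach i)) (Finset.mem_univ i)
  have hfind : Nat.find (hreach i) < K := by omega
  exact hm _ hfind (Nat.find_spec (hreach i))

/-- The matrix with row `w` equal to `e_w` and row `i ≠ w` equal to `e_i - e_{r i}`. -/
noncomputable def rowMat (w : V) (r : V → V) : Matrix V V ℚ :=
  Matrix.of fun i => if i = w then Pi.single w 1 else (Pi.single i 1 - Pi.single (r i) 1)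

lemma rowMat_eq (w : V) (r : V → V) :
    rowMat w r = 1 - Matrix.of fun i j => if i = w then 0 else if j = r i then (1:ℚ) else 0 := by
  ext i j
  rcases eq_or_ne i w with rfl | hi
  · simp [rowMat, Matrix.one_apply, Pi.single_apply, eq_comm]
  · simp only [rowMat, Matrix.of_apply, if_neg hi, Matrix.sub_apply,
      Matrix.one_apply, Pi.sub_apply, Pi.single_apply]
    rcases eq_or_ne i j with rfl | hij
    · simp
    · simp [hij, Ne.symm hij]

lemma det_rowMat_tree (w : V) (r : V → V) (hreach : ∀ v, ∃ k, r^[k] v = w) :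
    (rowMat w r).det = 1 := by
  rw [rowMat_eq]
  exact det_one_sub_nilpotent _ (nilpotent_parent r w hreach)

lemma det_rowMat_cycle (w : V) (r : V → V)
    (hnot : ¬ ∀ v, ∃ k, r^[k] v = w) : (rowMat w r).det = 0 := by
  classical
  push_neg at hnot
  obtain ⟨v₀, hv₀⟩ := hnot
  obtain ⟨s, t, hst, hne⟩ : ∃ s t : ℕ, r^[s] v₀ = r^[t] v₀ ∧ s < t := by
    obtain ⟨s, t, hne, heq⟩ := Finite.exists_ne_map_eq_of_infinite fun m : ℕ => r^[m] v₀
    rcases lt_or_gt_of_ne hne with h | h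
    · exact ⟨s, t, heq, h⟩
    · exact ⟨t, s, heq.symm, h⟩
  set a := r^[s] v₀ with ha
  set p := t - s with hp
  have hpp : 0 < p := by omega
  have hpa : r^[p] a = a := by
    rw [ha, ← Function.iterate_add_apply, hp]
    rw [show t - s + s = t by omega, ← hst]
  have haw : ∀ m, r^[m] a ≠ w := by
    intro m
    rw [ha, ← Function.iterate_add_apply]
    exact hv₀ (m + s)
  set C : Finset V := Finset.univ.filter (fun x => ∃ m, r^[m] a = x) with hC
  have haC : a ∈ C := by simp [hC]; exact ⟨0, rfl⟩
  have hCw : ∀ x ∈ C, x ≠ w := by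
    intro x hx
    simp only [hC, Finset.mem_filter] at hx
    obtain ⟨m, rfl⟩ := hx.2
    exact haw m
  have hfix : ∀ x ∈ C, r^[p] x = x := by
    intro x hx
    simp only [hC, Finset.mem_filter] at hx
    obtain ⟨m, rfl⟩ := hx.2
    rw [← Function.iterate_add_apply, Nat.add_comm, Function.iterate_add_apply, hpa]
  have hmapsto : ∀ x ∈ C, r x ∈ C := by
    intro x hx
    simp only [hC, Finset.mem_filter] at hx ⊢
    obtain ⟨m, rfl⟩ := hx.2
    exact ⟨Finset.mem_univ _, m + 1, by rw [Function.iterate_succ_apply']⟩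
  have hinvmem : ∀ x ∈ C, r^[p-1] x ∈ C := by
    intro x hx
    simp only [hC, Finset.mem_filter] at hx ⊢
    obtain ⟨m, rfl⟩ := hx.2
    exact ⟨Finset.mem_univ _, p - 1 + m, by rw [Function.iterate_add_apply]⟩
  have hri : ∀ x ∈ C, r^[p-1] (r x) = x := by
    intro x hx
    have h1 : r^[p-1] (r x) = r^[p-1+1] x := (Function.iterate_succ_apply r (p-1) x).symm
    rw [h1, show p - 1 + 1 = p by omega, hfix x hx]
  have hir : ∀ x ∈ C, r (r^[p-1] x) = x := by
    intro x hx
    have h1 : r (r^[p-1] x) = r^[p-1+1] x := (Function.iterate_succ_apply' r (p-1) x).symm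
    rw [h1, show p - 1 + 1 = p by omega, hfix x hx]
  have hsum : ∀ f : V → ℚ, ∑ i ∈ C, f (r i) = ∑ i ∈ C, f i := by
    intro f
    apply Finset.sum_nbij' (fun i => r i) (fun i => r^[p-1] i)
    · exact fun x hx => hmapsto x hx
    · exact fun x hx => hinvmem x hx
    · exact fun x hx => hri x hx
    · exact fun x hx => hir x hx
    · exact fun x hx => rfl
  rw [← Matrix.exists_vecMul_eq_zero_iff]
  refine ⟨fun i => if i ∈ C then 1 else 0, ?_, ?_⟩
  · intro h
    have := congrFun h a
    simp [haC] at this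
  · ext j
    rw [Matrix.vecMul, Pi.zero_apply]
    show ∑ i, (if i ∈ C then (1:ℚ) else 0) * rowMat w r i j = 0
    have step1 : ∀ i, (if i ∈ C then (1:ℚ) else 0) * rowMat w r i j
        = if i ∈ C then rowMat w r i j else 0 := by
      intro i; split <;> simp
    rw [Finset.sum_congr rfl fun i _ => step1 i, ← Finset.sum_filter, Finset.filter_univ_mem]
    have step2 : ∀ i ∈ C, rowMat w r i j
        = (Pi.single i (1:ℚ) : V → ℚ) j - (Pi.single (r i) (1:ℚ) : V → ℚ) j := by
      intro i hi
      simp [rowMat, hCw i hi]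
    rw [Finset.sum_congr rfl step2, Finset.sum_sub_distrib,
      hsum (fun x => (Pi.single x (1:ℚ) : V → ℚ) j), sub_self]

/-- The set of allowed values of a parent map at each vertex. -/
noncomputable def choiceSet (E : Finset (V × V)) (w : V) : V → Finset V :=
  fun i => if i = w then {w} else outs E i

lemma row_decomp (E : Finset (V × V)) (w : V) (i : V) :
    (lap E).updateRow w (Pi.single w 1) i
      = ∑ z ∈ choiceSet E w i,
          (if i = w then Pi.single w (1:ℚ) else Pi.single i 1 - Pi.single z 1) := by
  rcases eq_or_ne i w with rfl | hi
  · simp [choiceSet]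
  · rw [Matrix.updateRow_ne hi]
    ext j
    simp only [choiceSet, if_neg hi, Finset.sum_apply, Pi.sub_apply]
    rw [Finset.sum_sub_distrib]
    have h1 : ∑ z ∈ outs E i, (Pi.single i (1:ℚ) : V → ℚ) j
        = (outs E i).card * (if i = j then 1 else 0) := by
      rw [Finset.sum_const, nsmul_eq_mul]
      congr 1
      simp [Pi.single_apply, eq_comm]
    have h2 : ∑ z ∈ outs E i, (Pi.single z (1:ℚ) : V → ℚ) j
        = if (i, j) ∈ E then 1 else 0 := by
      simp only [Pi.single_apply]
      rw [Finset.sum_ite_eq (outs E i) j (fun _ => (1:ℚ))]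
      simp [outs]
    rw [h1, h2, outs_card]
    rfl

lemma det_update_eq_sum (E : Finset (V × V)) (w : V) :
    ((lap E).updateRow w (Pi.single w 1)).det
      = ∑ r ∈ Fintype.piFinset (choiceSet E w), (rowMat w r).det := by
  classical
  have hdecomp : (lap E).updateRow w (Pi.single w 1)
      = Matrix.of fun i => ∑ z ∈ choiceSet E w i,
          (if i = w then Pi.single w (1:ℚ) else Pi.single i 1 - Pi.single z 1) := by
    ext i j
    exact congrFun (row_decomp E w i) j
  rw [hdecomp]
  exact MultilinearMap.map_sum_finset
    (f := (Matrix.detRowAlternating (R := ℚ) (n := V)).toMultilinearMap)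
    (fun i z => if i = w then Pi.single w (1:ℚ) else Pi.single i 1 - Pi.single z 1)
    (choiceSet E w)

lemma mem_piFinset_iff (E : Finset (V × V)) (w : V) (r : V → V) :
    r ∈ Fintype.piFinset (choiceSet E w) ↔ (r w = w ∧ ∀ i, i ≠ w → (i, r i) ∈ E) := by
  rw [Fintype.mem_piFinset]
  constructor
  · intro h
    refine ⟨?_, fun i hi => ?_⟩
    · have := h w; simpa [choiceSet] using this
    · have := h i; simpa [choiceSet, hi, outs] using this
  · rintro ⟨h1, h2⟩ i
    rcases eq_or_ne i w with rfl | hi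
    · simp [choiceSet, h1]
    · simp [choiceSet, hi, outs, h2 i hi]

lemma sum_det_eq_kappa (E : Finset (V × V)) (w : V) :
    ∑ r ∈ Fintype.piFinset (choiceSet E w), (rowMat w r).det = (kappa E w : ℚ) := by
  classical
  have hstep : ∀ r ∈ Fintype.piFinset (choiceSet E w),
      (rowMat w r).det = if IsSpanTree E w r then 1 else 0 := by
    intro r hr
    rw [mem_piFinset_iff] at hr
    by_cases htree : ∀ v, ∃ k, r^[k] v = w
    · rw [det_rowMat_tree w r htree, if_pos ⟨hr.1, hr.2, htree⟩]
    · rw [det_rowMat_cycle w r htree, if_neg (fun h => htree h.2.2)]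
  rw [Finset.sum_congr rfl hstep, Finset.sum_boole]
  have hset : (Fintype.piFinset (choiceSet E w)).filter (IsSpanTree E w)
      = Finset.univ.filter (IsSpanTree E w) := by
    ext f
    simp only [Finset.mem_filter, Finset.mem_univ, true_and, and_iff_right_iff_imp]
    intro hf
    exact (mem_piFinset_iff E w f).2 ⟨hf.1, hf.2.1⟩
  rw [hset]
  have : kappa E w = (Finset.univ.filter (IsSpanTree E w)).card := by
    rw [kappa, Nat.card_eq_fintype_card, Fintype.card_subtype]
  rw [this]

lemma kappa_eq_adj (E : Finset (V × V)) (w : V) :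
    (kappa E w : ℚ) = adjugate (lap E) w w := by
  rw [Matrix.adjugate_apply, det_update_eq_sum, sum_det_eq_kappa]

end Stmt12Aux

/-- For a connected Eulerian digraph (every vertex has equal, positive in- and outdegree),
the number of oriented spanning trees rooted at `u` is the same for every vertex `u`. -/
theorem stmt12 (E : Finset (V × V)) (hconn : StronglyConnected E)
    (hdeg : ∀ v, outdeg E v = indeg E v ∧ 0 < outdeg E v) (u v : V) :
    kappa E u = kappa E v := by
  have h : (kappa E u : ℚ) = (kappa E v : ℚ) := by
    rw [Stmt12Aux.kappa_eq_adj, Stmt12Aux.kappa_eq_adj,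
      Stmt12Aux.adj_diag_eq hconn hdeg u v]
  exact_mod_cast h
end

section
/- Let G be a weighted digraph with vertex bipartition V(G) = V_1 ∪ V_2 and Laplacian L_G = [[L_1, -B],[-C, L_2]] with L_1, L_2 nonsingular. Let G_1 and G_2 be the weighted digraphs with Laplacians S_1 = L_1 - B L_2^{-1} C and S_2 = L_2 - C L_1^{-1} B respectively. Then for any vertex u ∈ V_1: d_u(G)·t_u(G_1) - Σ_{v∈V_1, vu∈E(G)} w_{vu}·t_v(G_1) = (det(L_1)/det(L_2)) · Σ_{v∈V_2, vu∈E(G)} w_{vu}·t_v(G_2), where t_x denotes the weighted spanning tree enumerator (equivalently, the principal cofactor of the relevant Laplacian at x) and d_u(G) the weighted outdegree of u. -/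
open Matrix

/-- The principal cofactor of a square matrix `S` at index `u`: the determinant of the
matrix obtained by deleting row `u` and column `u`. By the matrix-tree theorem this is the
spanning tree enumerator rooted at `u` when `S` is a Laplacian matrix. -/
noncomputable def pcof {K : Type*} [CommRing K] {V : Type*} [Fintype V] [DecidableEq V]
    (S : Matrix V V K) (u : V) : K :=
  (S.submatrix (fun a : {v // v ≠ u} => (a : V)) (fun a : {v // v ≠ u} => (a : V))).det

namespace Stmt18Aux

variable {K : Type*} [Field K] {n : Type*} [Fintype n] [DecidableEq n]

def splitEquiv (v : n) : ({i : n // i ≠ v} ⊕ Unit) ≃ n where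
  toFun := Sum.elim (fun a => (a : n)) (fun _ => v)
  invFun i := if h : i = v then Sum.inr () else Sum.inl ⟨i, h⟩
  left_inv := by rintro (⟨i, hi⟩ | ⟨⟩) <;> simp_all
  right_inv i := by by_cases h : i = v <;> simp [h]

lemma det_of_col_single (M : Matrix n n K) (v : n) (h1 : M v v = 1)
    (h0 : ∀ i, i ≠ v → M i v = 0) : M.det = pcof M v := by
  rw [← det_submatrix_equiv_self (splitEquiv v) M]
  have hM : M.submatrix (splitEquiv v) (splitEquiv v) =
      fromBlocks (M.submatrix (fun a : {i // i ≠ v} => (a : n)) (fun a : {i // i ≠ v} => (a : n)))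
        0 (Matrix.of fun _ (a : {i // i ≠ v}) => M v a) (Matrix.of fun _ _ => (1 : K)) := by
    ext i j
    rcases i with ⟨i, hi⟩ | _ <;> rcases j with ⟨j, hj⟩ | _ <;>
      simp_all [splitEquiv, fromBlocks, h1, h0]
  rw [hM, det_fromBlocks_zero₁₂, pcof]
  simp [det_unique]

end Stmt18Aux

namespace Stmt18Aux
variable {K : Type*} [Field K] {n : Type*} [Fintype n] [DecidableEq n]

lemma adjugate_eq_pcof (L : Matrix n n K) (hrow : ∀ i, ∑ j, L i j = 0) (u v : n) :
    L.adjugate u v = pcof L v := by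
  rw [adjugate_apply]
  set N := L.updateRow v (Pi.single u 1) with hN
  have hsum : (N.updateCol v (fun k => ∑ i, N k i)).det = N.det := by
    have h := det_updateCol_sum N v (fun _ => (1 : K))
    simpa using h
  have hcol : (fun k => ∑ i, N k i) = Pi.single v 1 := by
    funext k
    by_cases hk : k = v
    · subst hk; simp [hN, Pi.single_apply]
    · simp [hN, updateRow_apply, hk, hrow k, Pi.single_apply]
  rw [← hsum, hcol]
  have h1 : (N.updateCol v (Pi.single v 1)) v v = 1 := by simp
  have h0 : ∀ i, i ≠ v → (N.updateCol v (Pi.single v 1)) i v = 0 := by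
    intro i hi; simp [Pi.single_apply, hi]
  rw [det_of_col_single _ v h1 h0, pcof, pcof]
  congr 1
  ext ⟨i, hi⟩ ⟨j, hj⟩
  simp [hN, updateCol_apply, updateRow_apply, hi, hj]

lemma det_eq_zero_of_rowsum [Nonempty n] (L : Matrix n n K) (hrow : ∀ i, ∑ j, L i j = 0) :
    L.det = 0 := by
  rw [← Matrix.exists_mulVec_eq_zero_iff]
  refine ⟨fun _ => 1, ?_, ?_⟩
  · intro h
    have := congr_fun h (Classical.arbitrary n)
    simp at this
  · ext i
    simp [Matrix.mulVec, dotProduct, hrow i]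

end Stmt18Aux

namespace Stmt18Aux
variable {K : Type*} [Field K] {V₁ V₂ : Type*}
    [Fintype V₁] [DecidableEq V₁] [Fintype V₂] [DecidableEq V₂]

def inlEquiv (v : V₁) : ({a : V₁ // a ≠ v} ⊕ V₂) ≃ {x : V₁ ⊕ V₂ // x ≠ Sum.inl v} where
  toFun := Sum.elim (fun a => ⟨Sum.inl a, fun h => a.2 (Sum.inl.inj h)⟩)
    (fun b => ⟨Sum.inr b, Sum.inr_ne_inl⟩)
  invFun := fun x => match x with
    | ⟨Sum.inl a, h⟩ => Sum.inl ⟨a, fun hh => h (by rw [hh])⟩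
    | ⟨Sum.inr b, _⟩ => Sum.inr b
  left_inv := by rintro (⟨a, ha⟩ | b) <;> rfl
  right_inv := by rintro ⟨a | b, h⟩ <;> rfl

def inrEquiv (v : V₂) : (V₁ ⊕ {b : V₂ // b ≠ v}) ≃ {x : V₁ ⊕ V₂ // x ≠ Sum.inr v} where
  toFun := Sum.elim (fun a => ⟨Sum.inl a, Sum.inl_ne_inr⟩)
    (fun b => ⟨Sum.inr b, fun h => b.2 (Sum.inr.inj h)⟩)
  invFun := fun x => match x with
    | ⟨Sum.inl a, _⟩ => Sum.inl a
    | ⟨Sum.inr b, h⟩ => Sum.inr ⟨b, fun hh => h (by rw [hh])⟩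
  left_inv := by rintro (a | ⟨b, hb⟩) <;> rfl
  right_inv := by rintro ⟨a | b, h⟩ <;> rfl

lemma pcof_inl (L : Matrix (V₁ ⊕ V₂) (V₁ ⊕ V₂) K) (h₂ : IsUnit L.toBlocks₂₂.det) (v : V₁) :
    pcof L (Sum.inl v) = L.toBlocks₂₂.det *
      pcof (L.toBlocks₁₁ - L.toBlocks₁₂ * L.toBlocks₂₂⁻¹ * L.toBlocks₂₁) v := by
  haveI := L.toBlocks₂₂.invertibleOfIsUnitDet h₂
  set d : {a : V₁ // a ≠ v} → V₁ := fun a => (a : V₁) with hd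
  have key : pcof L (Sum.inl v) = (fromBlocks (L.toBlocks₁₁.submatrix d d)
      (L.toBlocks₁₂.submatrix d id) (L.toBlocks₂₁.submatrix id d) L.toBlocks₂₂).det := by
    rw [pcof, ← det_submatrix_equiv_self (inlEquiv v), submatrix_submatrix]
    congr 1
    ext i j
    rcases i with ⟨a, ha⟩ | b <;> rcases j with ⟨c, hc⟩ | e <;> rfl
  rw [key, det_fromBlocks₂₂, invOf_eq_nonsing_inv]
  congr 1

lemma pcof_inr (L : Matrix (V₁ ⊕ V₂) (V₁ ⊕ V₂) K) (h₁ : IsUnit L.toBlocks₁₁.det) (v : V₂) :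
    pcof L (Sum.inr v) = L.toBlocks₁₁.det *
      pcof (L.toBlocks₂₂ - L.toBlocks₂₁ * L.toBlocks₁₁⁻¹ * L.toBlocks₁₂) v := by
  haveI := L.toBlocks₁₁.invertibleOfIsUnitDet h₁
  set d : {b : V₂ // b ≠ v} → V₂ := fun a => (a : V₂) with hd
  have key : pcof L (Sum.inr v) = (fromBlocks L.toBlocks₁₁
      (L.toBlocks₁₂.submatrix id d) (L.toBlocks₂₁.submatrix d id)
      (L.toBlocks₂₂.submatrix d d)).det := by
    rw [pcof, ← det_submatrix_equiv_self (inrEquiv v), submatrix_submatrix]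
    congr 1
    ext i j
    rcases i with a | ⟨b, hb⟩ <;> rcases j with c | ⟨e, he⟩ <;> rfl
  rw [key, det_fromBlocks₁₁, invOf_eq_nonsing_inv]
  congr 1

end Stmt18Aux


open Stmt18Aux

/-- Let `G` be a weighted digraph with vertex bipartition `V₁ ∪ V₂` and Laplacian
`L = [[L₁, -B], [-C, L₂]]` (so all row sums are zero), with `L₁, L₂` nonsingular, and let
`S₁ = L₁ - B L₂⁻¹ C` and `S₂ = L₂ - C L₁⁻¹ B` be the Laplacians of the weighted digraphs
`G₁, G₂`. Then for any `u ∈ V₁`, writing `t_x` for the principal cofactor (= rooted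
spanning tree enumerator), `d_u = L (inl u) (inl u)` for the weighted outdegree and
`w_{vu} = -L v (inl u)` for the edge weights:
`d_u · t_u(G₁) - ∑_{v ∈ V₁, v ≠ u} w_{vu} t_v(G₁)
  = (det L₁ / det L₂) · ∑_{v ∈ V₂} w_{vu} t_v(G₂)`. -/
theorem stmt18 {K : Type*} [Field K] {V₁ V₂ : Type*}
    [Fintype V₁] [DecidableEq V₁] [Fintype V₂] [DecidableEq V₂]
    (L : Matrix (V₁ ⊕ V₂) (V₁ ⊕ V₂) K)
    (hrow : ∀ i, ∑ j, L i j = 0)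
    (h₁ : IsUnit L.toBlocks₁₁.det) (h₂ : IsUnit L.toBlocks₂₂.det)
    (u : V₁) :
    L (Sum.inl u) (Sum.inl u) *
        pcof (L.toBlocks₁₁ - (-L.toBlocks₁₂) * L.toBlocks₂₂⁻¹ * (-L.toBlocks₂₁)) u -
      ∑ v ∈ Finset.univ.erase u,
        (-L (Sum.inl v) (Sum.inl u)) *
          pcof (L.toBlocks₁₁ - (-L.toBlocks₁₂) * L.toBlocks₂₂⁻¹ * (-L.toBlocks₂₁)) v =
    L.toBlocks₁₁.det / L.toBlocks₂₂.det *
      ∑ v : V₂, (-L (Sum.inr v) (Sum.inl u)) *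
        pcof (L.toBlocks₂₂ - (-L.toBlocks₂₁) * L.toBlocks₁₁⁻¹ * (-L.toBlocks₁₂)) v := by
  haveI : Nonempty (V₁ ⊕ V₂) := ⟨Sum.inl u⟩
  have hneg₁ : (-L.toBlocks₁₂) * L.toBlocks₂₂⁻¹ * (-L.toBlocks₂₁) =
      L.toBlocks₁₂ * L.toBlocks₂₂⁻¹ * L.toBlocks₂₁ := by
    rw [Matrix.neg_mul, Matrix.neg_mul, Matrix.mul_neg, neg_neg]
  have hneg₂ : (-L.toBlocks₂₁) * L.toBlocks₁₁⁻¹ * (-L.toBlocks₁₂) =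
      L.toBlocks₂₁ * L.toBlocks₁₁⁻¹ * L.toBlocks₁₂ := by
    rw [Matrix.neg_mul, Matrix.neg_mul, Matrix.mul_neg, neg_neg]
  rw [hneg₁, hneg₂]
  set D₁ := L.toBlocks₁₁.det with hD₁
  set D₂ := L.toBlocks₂₂.det with hD₂
  set p₁ : V₁ → K := fun v =>
    pcof (L.toBlocks₁₁ - L.toBlocks₁₂ * L.toBlocks₂₂⁻¹ * L.toBlocks₂₁) v with hp₁
  set p₂ : V₂ → K := fun v =>
    pcof (L.toBlocks₂₂ - L.toBlocks₂₁ * L.toBlocks₁₁⁻¹ * L.toBlocks₁₂) v with hp₂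
  -- key identity
  have hadj := congr_fun (congr_fun (Matrix.adjugate_mul L) (Sum.inl u)) (Sum.inl u)
  rw [Matrix.smul_apply, Matrix.one_apply_eq, smul_eq_mul, mul_one,
    det_eq_zero_of_rowsum L hrow, Matrix.mul_apply] at hadj
  have hadjp : ∀ x, L.adjugate (Sum.inl u) x = pcof L x :=
    fun x => adjugate_eq_pcof L hrow (Sum.inl u) x
  simp only [hadjp] at hadj
  rw [Fintype.sum_sum_type] at hadj
  simp only [pcof_inl L h₂, pcof_inr L h₁, ← hD₁, ← hD₂, ← hp₁, ← hp₂] at hadj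
  have key : D₂ * (∑ v : V₁, p₁ v * L (Sum.inl v) (Sum.inl u)) +
      D₁ * (∑ v : V₂, p₂ v * L (Sum.inr v) (Sum.inl u)) = 0 := by
    rw [Finset.mul_sum, Finset.mul_sum, ← hadj]
    congr 1 <;> exact Finset.sum_congr rfl (fun v _ => by ring)
  -- rewrite LHS of goal as a full sum
  have hLHS : L (Sum.inl u) (Sum.inl u) * p₁ u -
      ∑ v ∈ Finset.univ.erase u, (-L (Sum.inl v) (Sum.inl u)) * p₁ v =
      ∑ v : V₁, p₁ v * L (Sum.inl v) (Sum.inl u) := by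
    rw [← Finset.add_sum_erase Finset.univ (fun v => p₁ v * L (Sum.inl v) (Sum.inl u))
      (Finset.mem_univ u)]
    rw [sub_eq_add_neg, ← Finset.sum_neg_distrib]
    congr 1
    · ring
    · exact Finset.sum_congr rfl (fun v _ => by ring)
  rw [hLHS]
  have hRHS : ∑ v : V₂, (-L (Sum.inr v) (Sum.inl u)) * p₂ v =
      -∑ v : V₂, p₂ v * L (Sum.inr v) (Sum.inl u) := by
    rw [← Finset.sum_neg_distrib]
    exact Finset.sum_congr rfl (fun v _ => by ring)
  rw [hRHS]
  have hD₂ne : D₂ ≠ 0 := h₂.ne_zero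
  field_simp
  linear_combination key
end
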